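/- arXiv:2512.22514 — 5 statements merged into one kernel-verified Lean document; each statement's English description precedes it below -/
import Mathlib

section
/- Let {E_{α,k} : k=1,…,M}, α=1,…,N, be an informationally complete (N,M)-POVM on ℂ^d with efficiency parameter x. Then for every density matrix ρ on ℂ^d, the coincidence index C(x,ρ) = Σ_{α=1}^{N} Σ_{k=1}^{M} (tr(E_{α,k} ρ))² equals (d(M²x − d)·tr(ρ²) + d³ − M²x)/(d·M(M−1)). -/
open scoped BigOperators ComplexOrder
open Matrix

noncomputable def traceNorm {m n : Type*} [Fintype m] [Fintype n] [DecidableEq n]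
    (X : Matrix m n ℂ) : ℝ :=
  ((Matrix.posSemidef_conjTranspose_mul_self X).1.eigenvectorUnitary.1 *
      diagonal (((↑) : ℝ → ℂ) ∘ (√·) ∘ (Matrix.posSemidef_conjTranspose_mul_self X).1.eigenvalues) *
      (star (Matrix.posSemidef_conjTranspose_mul_self X).1.eigenvectorUnitary : Matrix n n ℂ)).trace.re

def IsDensityMatrix {ι : Type*} [Fintype ι] (ρ : Matrix ι ι ℂ) : Prop :=
  ρ.PosSemidef ∧ ρ.trace = 1

def IsNMPOVM (d N M : ℕ) (x : ℝ)
    (E : Fin N → Fin M → Matrix (Fin d) (Fin d) ℂ) : Prop :=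
  (∀ α k, (E α k).PosSemidef) ∧
  (∀ α, ∑ k, E α k = 1) ∧
  (∀ α k, (E α k).trace = (((d : ℝ) / M : ℝ) : ℂ)) ∧
  (∀ α k, (E α k * E α k).trace = (x : ℂ)) ∧
  (∀ α k l, k ≠ l → (E α k * E α l).trace =
      ((((d : ℝ) - M * x) / (M * ((M : ℝ) - 1)) : ℝ) : ℂ)) ∧
  (∀ α β k l, α ≠ β → (E α k * E β l).trace = (((d : ℝ) / M ^ 2 : ℝ) : ℂ)) ∧
  ((d : ℝ) / M ^ 2 < x ∧ x ≤ min ((d : ℝ) ^ 2 / M ^ 2) ((d : ℝ) / M))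

def IsInfoComplete (d N M : ℕ) : Prop := ((M : ℝ) - 1) * N = (d : ℝ) ^ 2 - 1


lemma sum_Complex.normSq_identity {M : ℕ} (f : Fin M → ℂ) :
    (M : ℝ) * (∑ k, Complex.normSq (f k)) - Complex.normSq (∑ k, f k)
      = (1/2) * ∑ k : Fin M, ∑ l : Fin M, Complex.normSq (f k - f l) := by
  have h : ∀ k l : Fin M, Complex.normSq (f k - f l)
      = Complex.normSq (f k) + Complex.normSq (f l) - 2 * (f k * (starRingEnd ℂ) (f l)).re :=
    fun k l => Complex.normSq_sub _ _
  have h2 : ∑ k : Fin M, ∑ l : Fin M, (f k * (starRingEnd ℂ) (f l)).re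
      = Complex.normSq (∑ k, f k) := by
    have : ((∑ k, f k) * (starRingEnd ℂ) (∑ k, f k)) = (Complex.normSq (∑ k, f k) : ℂ) :=
      Complex.mul_conj _
    have h3 : ∑ k : Fin M, ∑ l : Fin M, (f k * (starRingEnd ℂ) (f l))
        = (∑ k, f k) * (starRingEnd ℂ) (∑ k, f k) := by
      rw [map_sum, Finset.sum_mul_sum]
    calc ∑ k : Fin M, ∑ l : Fin M, (f k * (starRingEnd ℂ) (f l)).re
        = (∑ k : Fin M, ∑ l : Fin M, (f k * (starRingEnd ℂ) (f l))).re := by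
          simp [Complex.re_sum]
      _ = _ := by rw [h3, this]; simp
  simp only [h, Finset.sum_sub_distrib, Finset.sum_add_distrib, Finset.sum_const,
    Finset.card_univ, Fintype.card_fin, nsmul_eq_mul, ← Finset.mul_sum, ← Finset.sum_mul]
  rw [← Finset.sum_comm]  -- maybe not needed
  rw [Finset.sum_comm, h2]; ring


lemma quad_expand {N M : ℕ} (w t u : ℂ) (c : Fin N × Fin M → ℂ) :
    (∑ i : Fin N × Fin M, (starRingEnd ℂ) (c i) *
      ∑ j : Fin N × Fin M, c j * (w +
        if i.1 = j.1 then (if i.2 = j.2 then t else u) else 0))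
    = w * ((starRingEnd ℂ) (∑ i : Fin N × Fin M, c i) * (∑ i : Fin N × Fin M, c i))
      + ∑ α : Fin N, ((t - u) * (∑ k, (starRingEnd ℂ) (c (α, k)) * c (α, k))
          + u * ((starRingEnd ℂ) (∑ k, c (α, k)) * (∑ k, c (α, k)))) := by
  have hsplit : ∀ p q : Prop, ∀ _inst : Decidable p, ∀ _inst2 : Decidable q,
      (if p then (if q then t else u) else 0)
        = (if p then u else 0) + (if p ∧ q then t - u else 0) := by
    intros p q i1 i2
    by_cases hp : p <;> by_cases hq : q <;> simp [hp, hq]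
  have h1 : ∀ (α : Fin N) (k : Fin M),
      (∑ j : Fin N × Fin M, c j *
        (if α = j.1 then (if k = j.2 then t else u) else 0))
      = u * (∑ l, c (α, l)) + (t - u) * c (α, k) := by
    intro α k
    rw [Fintype.sum_prod_type]
    simp only [hsplit, mul_add, mul_ite, mul_zero, Finset.sum_add_distrib,
      Finset.sum_ite_irrel, Finset.sum_const_zero, Finset.sum_ite_eq, Finset.sum_ite_eq',
      Finset.mem_univ, if_true, ite_and, Finset.mul_sum, Finset.sum_mul]
    ring_nf
    rw [Finset.sum_congr rfl fun l _ => mul_comm (c (α, l)) u]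
    ring
  have step1 : (∑ i : Fin N × Fin M, (starRingEnd ℂ) (c i) *
      ∑ j : Fin N × Fin M, c j * (w +
        if i.1 = j.1 then (if i.2 = j.2 then t else u) else 0))
      = ∑ i : Fin N × Fin M, (starRingEnd ℂ) (c i) *
          (w * (∑ j : Fin N × Fin M, c j)
            + (u * (∑ l, c (i.1, l)) + (t - u) * c i)) := by
    apply Finset.sum_congr rfl
    intro i _
    congr 1
    calc (∑ j : Fin N × Fin M, c j * (w + if i.1 = j.1 then (if i.2 = j.2 then t else u) else 0))
        = (∑ j : Fin N × Fin M, (c j * w + c j * (if i.1 = j.1 then (if i.2 = j.2 then t else u) else 0))) := by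
          apply Finset.sum_congr rfl; intro j _; ring
      _ = (∑ j : Fin N × Fin M, c j * w) + (∑ j : Fin N × Fin M, c j * (if i.1 = j.1 then (if i.2 = j.2 then t else u) else 0)) := Finset.sum_add_distrib
      _ = (∑ j : Fin N × Fin M, c j) * w + (u * (∑ l, c (i.1, l)) + (t - u) * c (i.1, i.2)) := by
          rw [Finset.sum_mul, h1]
      _ = w * (∑ j : Fin N × Fin M, c j) + (u * (∑ l, c (i.1, l)) + (t - u) * c i) := by
          rw [Prod.mk.eta, mul_comm]
  rw [step1]
  have hA : (∑ i : Fin N × Fin M, (starRingEnd ℂ) (c i) * (w * (∑ j : Fin N × Fin M, c j)))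
      = w * ((starRingEnd ℂ) (∑ i : Fin N × Fin M, c i) * (∑ i : Fin N × Fin M, c i)) := by
    rw [← Finset.sum_mul, map_sum]; ring
  have hB : (∑ i : Fin N × Fin M, (starRingEnd ℂ) (c i) * (u * (∑ l, c (i.1, l))))
      = ∑ α : Fin N, u * ((starRingEnd ℂ) (∑ k, c (α, k)) * (∑ k, c (α, k))) := by
    rw [Fintype.sum_prod_type]
    apply Finset.sum_congr rfl
    intro α _
    simp only [Prod.fst]
    rw [← Finset.sum_mul, map_sum]
    ring
  have hC : (∑ i : Fin N × Fin M, (starRingEnd ℂ) (c i) * ((t - u) * c i))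
      = ∑ α : Fin N, (t - u) * (∑ k, (starRingEnd ℂ) (c (α, k)) * c (α, k)) := by
    rw [Fintype.sum_prod_type]
    apply Finset.sum_congr rfl
    intro α _
    rw [Finset.mul_sum]
    apply Finset.sum_congr rfl
    intro k _
    ring
  have expand : (∑ i : Fin N × Fin M, (starRingEnd ℂ) (c i) *
          (w * (∑ j : Fin N × Fin M, c j)
            + (u * (∑ l, c (i.1, l)) + (t - u) * c i)))
      = (∑ i : Fin N × Fin M, (starRingEnd ℂ) (c i) * (w * (∑ j : Fin N × Fin M, c j)))
        + ((∑ i : Fin N × Fin M, (starRingEnd ℂ) (c i) * (u * (∑ l, c (i.1, l))))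
          + (∑ i : Fin N × Fin M, (starRingEnd ℂ) (c i) * ((t - u) * c i))) := by
    simp [mul_add, Finset.sum_add_distrib]
  rw [expand, hA, hB, hC, ← Finset.sum_add_distrib]
  congr 1
  apply Finset.sum_congr rfl
  intro α _
  ring

lemma povm_trace_injective {d N M : ℕ} (hN : 0 < N) (hM : 2 ≤ M) (hd : 1 ≤ d)
    (hcard : N * (M - 1) = d ^ 2 - 1)
    (E : Fin N → Fin M → Matrix (Fin d) (Fin d) ℂ)
    (w t u : ℝ) (ht : 0 < t) (hw : 0 < w) (hu : u = -t / ((M : ℝ) - 1))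
    (hg : ∀ i j : Fin N × Fin M, (E i.1 i.2 * E j.1 j.2).trace
        = (w : ℂ) + (if i.1 = j.1 then (if i.2 = j.2 then (t : ℂ) else (u : ℂ)) else 0))
    (D : Matrix (Fin d) (Fin d) ℂ)
    (hD : ∀ i : Fin N × Fin M, (E i.1 i.2 * D).trace = 0) : D = 0 := by
  have hM1 : (0:ℝ) < (M:ℝ) - 1 := by
    have : (2:ℝ) ≤ (M:ℝ) := by exact_mod_cast hM
    linarith
  -- the linear maps
  let φ : Matrix (Fin d) (Fin d) ℂ →ₗ[ℂ] (Fin N × Fin M → ℂ) :=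
    { toFun := fun X i => (E i.1 i.2 * X).trace
      map_add' := fun X Y => by
        funext i; simp [Matrix.mul_add]
      map_smul' := fun r X => by
        funext i; simp [Matrix.mul_smul] }
  let L : (Fin N × Fin M → ℂ) →ₗ[ℂ] Matrix (Fin d) (Fin d) ℂ :=
    { toFun := fun c => ∑ i : Fin N × Fin M, c i • E i.1 i.2
      map_add' := fun c c' => by
        simp [add_smul, Finset.sum_add_distrib]
      map_smul' := fun r c => by
        simp [smul_smul, Finset.smul_sum] }
  have hψ : ∀ (c : Fin N × Fin M → ℂ) (i : Fin N × Fin M),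
      φ (L c) i = ∑ j : Fin N × Fin M, c j * ((w : ℂ) +
        if i.1 = j.1 then (if i.2 = j.2 then (t : ℂ) else (u : ℂ)) else 0) := by
    intro c i
    show (E i.1 i.2 * ∑ j : Fin N × Fin M, c j • E j.1 j.2).trace = _
    rw [Matrix.mul_sum, Matrix.trace_sum]
    apply Finset.sum_congr rfl
    intro j _
    rw [Matrix.mul_smul, Matrix.trace_smul, hg i j, smul_eq_mul]
  -- kernel analysis
  have hker : ∀ c : Fin N × Fin M → ℂ, φ (L c) = 0 →
      (∀ (α : Fin N) (k l : Fin M), c (α, k) = c (α, l)) ∧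
        (∑ i : Fin N × Fin M, c i) = 0 := by
    intro c hc
    have hzero : (0 : ℂ) = ((w * Complex.normSq (∑ i : Fin N × Fin M, c i)
        + ∑ α : Fin N, ((t - u) * (∑ k, Complex.normSq (c (α, k)))
            + u * Complex.normSq (∑ k, c (α, k))) : ℝ) : ℂ) := by
      have h0 : (∑ i : Fin N × Fin M, (starRingEnd ℂ) (c i) * φ (L c) i) = 0 := by
        rw [hc]; simp
      rw [Finset.sum_congr rfl (fun i _ => by rw [hψ c i])] at h0
      rw [quad_expand] at h0
      rw [← h0]
      push_cast
      simp only [Complex.normSq_eq_conj_mul_self]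
    have hreal : (w * Complex.normSq (∑ i : Fin N × Fin M, c i)
        + ∑ α : Fin N, ((t - u) * (∑ k, Complex.normSq (c (α, k)))
            + u * Complex.normSq (∑ k, c (α, k)))) = 0 := by
      exact_mod_cast hzero.symm
    -- rewrite per-α terms via sum_Complex.normSq_identity
    have hterm : ∀ α : Fin N, ((t - u) * (∑ k, Complex.normSq (c (α, k)))
            + u * Complex.normSq (∑ k, c (α, k)))
        = (t / ((M:ℝ) - 1)) * ((1/2) * ∑ k : Fin M, ∑ l : Fin M,
            Complex.normSq (c (α, k) - c (α, l))) := by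
      intro α
      rw [← sum_Complex.normSq_identity]
      rw [hu]
      field_simp
      ring
    rw [Finset.sum_congr rfl (fun α _ => hterm α)] at hreal
    have hnn : ∀ α : Fin N, 0 ≤ (t / ((M:ℝ) - 1)) * ((1/2) * ∑ k : Fin M, ∑ l : Fin M,
        Complex.normSq (c (α, k) - c (α, l))) := by
      intro α
      apply mul_nonneg (le_of_lt (div_pos ht hM1))
      apply mul_nonneg (by norm_num)
      apply Finset.sum_nonneg; intro k _
      apply Finset.sum_nonneg; intro l _
      exact Complex.normSq_nonneg _
    have hS : Complex.normSq (∑ i : Fin N × Fin M, c i) = 0 ∧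
        ∀ α : Fin N, (∑ k : Fin M, ∑ l : Fin M, Complex.normSq (c (α, k) - c (α, l))) = 0 := by
      have h1 : 0 ≤ w * Complex.normSq (∑ i : Fin N × Fin M, c i) :=
        mul_nonneg (le_of_lt hw) (Complex.normSq_nonneg _)
      have h2 : 0 ≤ ∑ α : Fin N, (t / ((M:ℝ) - 1)) * ((1/2) * ∑ k : Fin M, ∑ l : Fin M,
          Complex.normSq (c (α, k) - c (α, l))) := Finset.sum_nonneg fun α _ => hnn α
      have hw0 : w * Complex.normSq (∑ i : Fin N × Fin M, c i) = 0 := by linarith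
      constructor
      · rcases mul_eq_zero.mp hw0 with h | h
        · exact absurd h (ne_of_gt hw)
        · exact h
      · intro α
        have hsum0 : ∑ α : Fin N, (t / ((M:ℝ) - 1)) * ((1/2) * ∑ k : Fin M, ∑ l : Fin M,
            Complex.normSq (c (α, k) - c (α, l))) = 0 := by linarith
        have := (Finset.sum_eq_zero_iff_of_nonneg (fun α _ => hnn α)).mp hsum0 α (Finset.mem_univ α)
        rcases mul_eq_zero.mp this with h | h
        · exact absurd h (ne_of_gt (div_pos ht hM1))
        · rcases mul_eq_zero.mp h with h' | h'
          · norm_num at h'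
          · exact h'
    constructor
    · intro α k l
      have h := hS.2 α
      have hnn2 : ∀ k : Fin M, (0:ℝ) ≤ ∑ l : Fin M, Complex.normSq (c (α, k) - c (α, l)) :=
        fun k => Finset.sum_nonneg fun l _ => Complex.normSq_nonneg _
      have h2 := (Finset.sum_eq_zero_iff_of_nonneg (fun k _ => hnn2 k)).mp h k (Finset.mem_univ k)
      have h3 := (Finset.sum_eq_zero_iff_of_nonneg
        (fun l _ => Complex.normSq_nonneg _)).mp h2 l (Finset.mem_univ l)
      exact sub_eq_zero.mp (Complex.normSq_eq_zero.mp h3)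
    · exact Complex.normSq_eq_zero.mp hS.1
  -- dimension counting
  classical
  let k0 : Fin M := ⟨0, by omega⟩
  let σ : (Fin N → ℂ) →ₗ[ℂ] ℂ :=
    { toFun := fun v => ∑ α, v α
      map_add' := fun v v' => by simp [Finset.sum_add_distrib]
      map_smul' := fun r v => by simp [Finset.mul_sum] }
  have hσsurj : Function.Surjective σ := by
    intro z
    refine ⟨Pi.single (⟨0, hN⟩ : Fin N) z, ?_⟩
    show (∑ α, Pi.single (⟨0, hN⟩ : Fin N) z α) = z
    simp
  have hrnσ := LinearMap.finrank_range_add_finrank_ker σ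
  rw [Module.finrank_fintype_fun_eq_card, Fintype.card_fin] at hrnσ
  rw [LinearMap.range_eq_top.mpr hσsurj, finrank_top, Module.finrank_self] at hrnσ
  -- the projection map restricted to the kernel of φ ∘ L
  let π : (Fin N × Fin M → ℂ) →ₗ[ℂ] (Fin N → ℂ) :=
    { toFun := fun c α => c (α, k0)
      map_add' := fun c c' => rfl
      map_smul' := fun r c => rfl }
  have hmem : ∀ c ∈ LinearMap.ker (φ.comp L), π c ∈ LinearMap.ker σ := by
    intro c hc
    rw [LinearMap.mem_ker] at hc ⊢
    obtain ⟨hconst, hsum⟩ := hker c hc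
    have hexp : (∑ i : Fin N × Fin M, c i) = (M : ℂ) * ∑ α, c (α, k0) := by
      rw [Fintype.sum_prod_type, Finset.mul_sum]
      apply Finset.sum_congr rfl
      intro α _
      rw [Finset.sum_congr rfl (fun k _ => hconst α k k0)]
      simp [mul_comm]
    rw [hexp] at hsum
    rcases mul_eq_zero.mp hsum with h | h
    · exact absurd h (Nat.cast_ne_zero.mpr (by omega))
    · exact h
  let μ : LinearMap.ker (φ.comp L) →ₗ[ℂ] LinearMap.ker σ :=
    LinearMap.codRestrict (LinearMap.ker σ) (π.comp (LinearMap.ker (φ.comp L)).subtype)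
      (fun x => hmem x.1 x.2)
  have hμinj : Function.Injective μ := by
    intro a b hab
    ext i
    have h1 := hker a.1 (LinearMap.mem_ker.mp a.2)
    have h2 := hker b.1 (LinearMap.mem_ker.mp b.2)
    have hπ : π a.1 = π b.1 := congrArg Subtype.val hab
    have : a.1 (i.1, k0) = b.1 (i.1, k0) := congrFun hπ i.1
    calc (a.1 : Fin N × Fin M → ℂ) i = a.1 (i.1, i.2) := by rw [Prod.mk.eta]
      _ = a.1 (i.1, k0) := h1.1 i.1 i.2 k0
      _ = b.1 (i.1, k0) := this
      _ = b.1 (i.1, i.2) := (h2.1 i.1 i.2 k0).symm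
      _ = b.1 i := by rw [Prod.mk.eta]
  have hker_le : Module.finrank ℂ (LinearMap.ker (φ.comp L)) ≤ Module.finrank ℂ (LinearMap.ker σ) :=
    LinearMap.finrank_le_finrank_of_injective hμinj
  have hrnψ := LinearMap.finrank_range_add_finrank_ker (φ.comp L)
  rw [Module.finrank_fintype_fun_eq_card, Fintype.card_prod, Fintype.card_fin, Fintype.card_fin] at hrnψ
  have hrange_le : LinearMap.range (φ.comp L) ≤ LinearMap.range φ :=
    LinearMap.range_comp_le_range L φ
  have hrange_rank : Module.finrank ℂ (LinearMap.range (φ.comp L)) ≤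
      Module.finrank ℂ (LinearMap.range φ) := Submodule.finrank_mono hrange_le
  have hrnφ := LinearMap.finrank_range_add_finrank_ker φ
  have hmat : Module.finrank ℂ (Matrix (Fin d) (Fin d) ℂ) = d * d := by
    rw [Module.finrank_matrix, Fintype.card_fin, Module.finrank_self, mul_one]
  rw [hmat] at hrnφ
  have hnm : N * M = N * (M - 1) + N := by
    have hm' : M - 1 + 1 = M := by omega
    calc N * M = N * (M - 1 + 1) := by rw [hm']
      _ = N * (M - 1) + N := by rw [Nat.mul_succ]
  have hd2 : 1 ≤ d ^ 2 := Nat.one_le_pow _ _ (by omega)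
  have hdd : d * d = d ^ 2 := (sq d).symm
  rw [hdd] at hrnφ
  have harith : ∀ Q P R ks a1 r1 r2 k2 : ℕ, 1 ≤ Q → P = Q - 1 → R = P + N →
      1 + ks = N → a1 ≤ ks → r1 + a1 = R →
      r1 ≤ r2 → r2 + k2 = Q → k2 = 0 := by
    intro Q P R ks a1 r1 r2 k2 e0 ep er e1 e2 e3 e4 e5
    omega
  have hkerφ : Module.finrank ℂ (LinearMap.ker φ) = 0 :=
    harith (d ^ 2) (N * (M - 1)) (N * M) _ _ _ _ _ hd2 hcard hnm hrnσ hker_le hrnψ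
      hrange_rank hrnφ
  have hkerbot : LinearMap.ker φ = ⊥ := Submodule.finrank_eq_zero.mp hkerφ
  have hDmem : D ∈ LinearMap.ker φ := by
    rw [LinearMap.mem_ker]
    funext i
    exact hD i
  rw [hkerbot, Submodule.mem_bot] at hDmem
  exact hDmem

lemma row_expand {N M : ℕ} (w t u : ℂ) (y : Fin N × Fin M → ℂ) (i : Fin N × Fin M) :
    (∑ j : Fin N × Fin M, y j * (w +
        if i.1 = j.1 then (if i.2 = j.2 then t else u) else 0))
    = w * (∑ j : Fin N × Fin M, y j)
      + (u * (∑ l, y (i.1, l)) + (t - u) * y i) := by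
  have hsplit : ∀ p q : Prop, ∀ _inst : Decidable p, ∀ _inst2 : Decidable q,
      (if p then (if q then t else u) else 0)
        = (if p then u else 0) + (if p ∧ q then t - u else 0) := by
    intros p q i1 i2
    by_cases hp : p <;> by_cases hq : q <;> simp [hp, hq]
  have h1 : (∑ j : Fin N × Fin M, y j *
        (if i.1 = j.1 then (if i.2 = j.2 then t else u) else 0))
      = u * (∑ l, y (i.1, l)) + (t - u) * y (i.1, i.2) := by
    rw [Fintype.sum_prod_type]
    simp only [hsplit, mul_add, mul_ite, mul_zero, Finset.sum_add_distrib,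
      Finset.sum_ite_irrel, Finset.sum_const_zero, Finset.sum_ite_eq, Finset.sum_ite_eq',
      Finset.mem_univ, if_true, ite_and, Finset.mul_sum, Finset.sum_mul]
    ring_nf
    rw [Finset.sum_congr rfl fun l _ => mul_comm (y (i.1, l)) u]
    ring
  calc (∑ j : Fin N × Fin M, y j * (w +
        if i.1 = j.1 then (if i.2 = j.2 then t else u) else 0))
      = (∑ j : Fin N × Fin M, (y j * w + y j *
          (if i.1 = j.1 then (if i.2 = j.2 then t else u) else 0))) := by
        apply Finset.sum_congr rfl; intro j _; ring
    _ = (∑ j : Fin N × Fin M, y j * w) + (∑ j : Fin N × Fin M, y j *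
          (if i.1 = j.1 then (if i.2 = j.2 then t else u) else 0)) := Finset.sum_add_distrib
    _ = (∑ j : Fin N × Fin M, y j) * w + (u * (∑ l, y (i.1, l)) + (t - u) * y (i.1, i.2)) := by
        rw [Finset.sum_mul, h1]
    _ = w * (∑ j : Fin N × Fin M, y j) + (u * (∑ l, y (i.1, l)) + (t - u) * y i) := by
        rw [Prod.mk.eta, mul_comm]
/-- For an informationally complete (N,M)-POVM with efficiency
parameter x, the coincidence index C(x,ρ) = Σ_{α,k} (tr(E_{α,k} ρ))² equals
(d(M²x − d)·tr(ρ²) + d³ − M²x)/(d·M(M−1)) for every density matrix ρ. -/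
theorem coincidence_index_eq (d N M : ℕ) (x : ℝ)
    (E : Fin N → Fin M → Matrix (Fin d) (Fin d) ℂ)
    (hE : IsNMPOVM d N M x E) (hIC : IsInfoComplete d N M)
    (ρ : Matrix (Fin d) (Fin d) ℂ) (hρ : IsDensityMatrix ρ) :
    ∑ α, ∑ k, ((E α k * ρ).trace) ^ 2 =
      ((d : ℂ) * ((M : ℂ) ^ 2 * (x : ℂ) - (d : ℂ)) * (ρ * ρ).trace
          + (d : ℂ) ^ 3 - (M : ℂ) ^ 2 * (x : ℂ)) /
        ((d : ℂ) * ((M : ℂ) * ((M : ℂ) - 1))) := by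

  obtain ⟨hpos, hsum, htr, htr2, hoff, hcross, hx1, hx2⟩ := hE
  rw [le_min_iff] at hx2
  obtain ⟨hx2a, hx2b⟩ := hx2
  have hd : 1 ≤ d := by
    rcases Nat.eq_zero_or_pos d with h | h
    · subst h
      norm_num at hx1 hx2a
      linarith
    · exact h
  have hM : 2 ≤ M := by
    by_contra h
    push_neg at h
    interval_cases M
    · norm_num at hx1 hx2a
      linarith
    · norm_num at hx1 hx2b
      linarith
  have hdR : (1:ℝ) ≤ (d:ℝ) := by exact_mod_cast hd
  have hMR : (2:ℝ) ≤ (M:ℝ) := by exact_mod_cast hM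
  have hM1R : (0:ℝ) < (M:ℝ) - 1 := by linarith
  have hMR0 : (0:ℝ) < (M:ℝ) := by linarith
  have hdR0 : (0:ℝ) < (d:ℝ) := by linarith
  have hdC : (d:ℂ) ≠ 0 := by exact_mod_cast ne_of_gt (by exact_mod_cast hdR0 : (0:ℝ) < (d:ℝ))
  have hMC : (M:ℂ) ≠ 0 := Nat.cast_ne_zero.mpr (by omega)
  have hM1C : (M:ℂ) - 1 ≠ 0 := by
    intro h
    have : (M:ℂ) = 1 := by linear_combination h
    have : (M:ℕ) = 1 := by exact_mod_cast this
    omega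
  have hIC' : ((M:ℝ) - 1) * N = (d:ℝ)^2 - 1 := hIC
  rcases Nat.eq_zero_or_pos N with hN0 | hN
  · -- degenerate case: N = 0, hence d = 1
    subst hN0
    have hd1 : d = 1 := by
      have h1 : ((M:ℝ) - 1) * ((0:ℕ):ℝ) = (d:ℝ)^2 - 1 := hIC
      have h2 : (d:ℝ)^2 = 1 := by push_cast at h1; linarith
      have h3 : d^2 = 1 := by exact_mod_cast h2
      nlinarith [sq_nonneg (d - 1), h3]
    subst hd1
    have hρ1 : ρ 0 0 = 1 := by
      have := hρ.2
      simpa [Matrix.trace, Matrix.diag] using this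
    have hρ2 : (ρ * ρ).trace = 1 := by
      simp [Matrix.trace, Matrix.diag, Matrix.mul_apply, hρ1]
    rw [hρ2]
    simp only [Finset.univ_eq_empty, Finset.sum_empty]
    symm
    rw [div_eq_zero_iff]
    left
    push_cast
    ring
  · -- main case
    set w : ℝ := (d:ℝ) / M^2 with hw_def
    set t : ℝ := x - (d:ℝ) / M^2 with ht_def
    set u : ℝ := -t / ((M:ℝ) - 1) with hu_def
    set a : ℝ := t * M / ((M:ℝ) - 1) with ha_def
    set f : ℝ := (w * N + u) * M / (d:ℝ) with hf_def
    have hw : 0 < w := div_pos hdR0 (by positivity)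
    have ht : 0 < t := by rw [ht_def]; linarith
    have hcard : N * (M - 1) = d ^ 2 - 1 := by
      have h1 : ((N * (M - 1) : ℕ) : ℝ) = ((d ^ 2 - 1 : ℕ) : ℝ) := by
        rw [Nat.cast_mul, Nat.cast_sub (by omega : 1 ≤ M), Nat.cast_sub (Nat.one_le_pow _ _ (by omega))]
        push_cast
        linear_combination hIC'
      exact_mod_cast h1
    have hg : ∀ i j : Fin N × Fin M, (E i.1 i.2 * E j.1 j.2).trace
        = (w : ℂ) + (if i.1 = j.1 then (if i.2 = j.2 then (t : ℂ) else (u : ℂ)) else 0) := by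
      intro i j
      by_cases hab : i.1 = j.1
      · by_cases hkl : i.2 = j.2
        · rw [← hab, ← hkl] at *
          rw [htr2 i.1 i.2, if_pos rfl, if_pos rfl, ← Complex.ofReal_add]
          congr 1
          rw [hw_def, ht_def]; ring
        · rw [← hab] at *
          rw [hoff i.1 i.2 j.2 hkl, if_pos rfl, if_neg hkl, ← Complex.ofReal_add]
          congr 1
          rw [hw_def, hu_def, ht_def]
          field_simp
          ring
      · rw [hcross i.1 j.1 i.2 j.2 hab, if_neg hab, add_zero]
    -- the traces y
    set y : Fin N × Fin M → ℂ := fun j => (E j.1 j.2 * ρ).trace with hy_def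
    have hrow : ∀ α : Fin N, (∑ l, y (α, l)) = 1 := by
      intro α
      rw [hy_def]
      simp only
      rw [← Matrix.trace_sum]
      rw [← Matrix.sum_mul, hsum α, Matrix.one_mul, hρ.2]
    have htot : (∑ j : Fin N × Fin M, y j) = (N : ℂ) := by
      rw [Fintype.sum_prod_type]
      rw [Finset.sum_congr rfl (fun α _ => hrow α)]
      simp
    -- key matrix D
    set D : Matrix (Fin d) (Fin d) ℂ :=
      (∑ j : Fin N × Fin M, y j • E j.1 j.2) - (a : ℂ) • ρ - (f : ℂ) • 1 with hD_def
    have hta : (t : ℂ) - (u : ℂ) = (a : ℂ) := by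
      rw [ha_def, hu_def]
      push_cast
      field_simp
      ring
    have hfd : (f : ℂ) * ((((d : ℝ) / M : ℝ)) : ℂ) = (w : ℂ) * N + (u : ℂ) := by
      rw [hf_def]
      push_cast
      field_simp
    have hD0 : ∀ i : Fin N × Fin M, (E i.1 i.2 * D).trace = 0 := by
      intro i
      rw [hD_def]
      rw [Matrix.mul_sub, Matrix.mul_sub, Matrix.trace_sub, Matrix.trace_sub]
      rw [Matrix.mul_sum, Matrix.trace_sum]
      have hterm : ∀ j : Fin N × Fin M, (E i.1 i.2 * (y j • E j.1 j.2)).trace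
          = y j * ((w : ℂ) + (if i.1 = j.1 then (if i.2 = j.2 then (t : ℂ) else (u : ℂ)) else 0)) := by
        intro j
        rw [Matrix.mul_smul, Matrix.trace_smul, smul_eq_mul, hg i j]
      rw [Finset.sum_congr rfl (fun j _ => hterm j)]
      rw [row_expand, htot, hrow i.1]
      rw [Matrix.mul_smul, Matrix.trace_smul, smul_eq_mul]
      rw [Matrix.mul_smul, Matrix.mul_one, Matrix.trace_smul, smul_eq_mul]
      rw [htr i.1 i.2]
      have : y i = (E i.1 i.2 * ρ).trace := rfl
      rw [← this, hta, hfd]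
      ring
    have hDzero : D = 0 :=
      povm_trace_injective hN hM hd hcard E w t u ht hw hu_def hg D hD0
    have hkey : (∑ j : Fin N × Fin M, y j • E j.1 j.2) = (a : ℂ) • ρ + (f : ℂ) • 1 := by
      have h1 : (∑ j : Fin N × Fin M, y j • E j.1 j.2) - (a : ℂ) • ρ - (f : ℂ) • 1 = 0 := hDzero
      rw [sub_sub, sub_eq_zero] at h1
      exact h1
    have hmain : (∑ j : Fin N × Fin M, y j * y j) = (a : ℂ) * (ρ * ρ).trace + (f : ℂ) := by
      have h2 := congrArg (fun X => (X * ρ).trace) hkey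
      rw [Matrix.sum_mul, Matrix.trace_sum] at h2
      have h3 : ∀ j : Fin N × Fin M, ((y j • E j.1 j.2) * ρ).trace = y j * y j := by
        intro j
        rw [Matrix.smul_mul, Matrix.trace_smul, smul_eq_mul]
      rw [Finset.sum_congr rfl (fun j _ => h3 j)] at h2
      rw [Matrix.add_mul, Matrix.smul_mul, Matrix.smul_mul, Matrix.one_mul,
        Matrix.trace_add, Matrix.trace_smul, Matrix.trace_smul, smul_eq_mul, smul_eq_mul,
        hρ.2, mul_one] at h2
      exact h2
    have hNval : (N : ℂ) = ((d:ℂ)^2 - 1) / ((M:ℂ) - 1) := by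
      have hC : ((M:ℂ) - 1) * N = (d:ℂ)^2 - 1 := by exact_mod_cast hIC'
      rw [eq_div_iff hM1C]
      linear_combination hC
    calc (∑ α, ∑ k, ((E α k * ρ).trace) ^ 2) = ∑ j : Fin N × Fin M, y j * y j := by
          rw [Fintype.sum_prod_type]
          apply Finset.sum_congr rfl
          intro α _
          apply Finset.sum_congr rfl
          intro k _
          rw [pow_two]
      _ = (a : ℂ) * (ρ * ρ).trace + (f : ℂ) := hmain
      _ = ((d : ℂ) * ((M : ℂ) ^ 2 * (x : ℂ) - (d : ℂ)) * (ρ * ρ).trace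
          + (d : ℂ) ^ 3 - (M : ℂ) ^ 2 * (x : ℂ)) /
        ((d : ℂ) * ((M : ℂ) * ((M : ℂ) - 1))) := by
          rw [ha_def, hf_def, hu_def, ht_def, hw_def]
          push_cast
          rw [hNval]
          field_simp
          ring
end

section
/- Let {E_{α,k} : k=1,…,M}, α=1,…,N, be an informationally complete (N,M)-POVM on ℂ^d with efficiency parameter x. Then for every density matrix ρ on ℂ^d, Σ_{α=1}^{N} Σ_{k=1}^{M} (tr(E_{α,k} ρ))² ≤ ((d−1)/d)·(d² + M²x)/(M(M−1)). -/
open scoped BigOperators ComplexOrder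
open Matrix

lemma aux_trace_nonneg {n : Type*} [Fintype n] (X : Matrix n n ℂ) :
    0 ≤ ((Xᴴ * X).trace).re := by
  have h : (Xᴴ * X).trace = ∑ j, ∑ i, ((Complex.normSq (X i j) : ℝ) : ℂ) := by
    simp only [Matrix.trace, Matrix.diag, Matrix.mul_apply, Matrix.conjTranspose_apply]
    congr 1; ext j; congr 1; ext i
    rw [Complex.normSq_eq_conj_mul_self]; simp [Complex.ofReal_mul]
  rw [h]
  simp only [Complex.re_sum]
  refine Finset.sum_nonneg fun j _ => Finset.sum_nonneg fun i _ => ?_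
  simp [Complex.normSq_nonneg]

lemma aux_trace_real {n : Type*} [Fintype n] (A B : Matrix n n ℂ)
    (hA : Aᴴ = A) (hB : Bᴴ = B) :
    ((A * B).trace) = (((A * B).trace.re : ℝ) : ℂ) := by
  have h : (starRingEnd ℂ) ((A * B).trace) = (A * B).trace := by
    have := Matrix.trace_conjTranspose (A * B)
    rw [Matrix.conjTranspose_mul, hA, hB, Matrix.trace_mul_comm] at this
    exact this.symm
  exact ((Complex.conj_eq_iff_re).mp h).symm

lemma aux_purity {n : Type*} [Fintype n] [DecidableEq n] (ρ : Matrix n n ℂ)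
    (hpsd : ρ.PosSemidef) (htr : ρ.trace = 1) : ((ρ * ρ).trace).re ≤ 1 := by
  have hH : ρ.IsHermitian := hpsd.1
  set U : Matrix n n ℂ := (hH.eigenvectorUnitary : Matrix n n ℂ) with hU
  set D : Matrix n n ℂ := Matrix.diagonal (RCLike.ofReal ∘ hH.eigenvalues) with hD
  have hspec := hH.spectral_theorem
  rw [Unitary.conjStarAlgAut_apply, ← hU, ← hD] at hspec
  have hUU : (star U) * U = 1 := (Matrix.mem_unitaryGroup_iff').mp hH.eigenvectorUnitary.2
  have htrD : D.trace = ∑ i, ((hH.eigenvalues i : ℝ) : ℂ) := by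
    simp [hD, Matrix.trace_diagonal]
  have h1 : ρ.trace = D.trace := by
    rw [hspec, Matrix.trace_mul_cycle, hUU, Matrix.one_mul]
  have hrr : ρ * ρ = U * (D * (star U * U * (D * star U))) := by
    rw [hspec]; simp only [Matrix.mul_assoc]
  have h2 : (ρ * ρ).trace = (D * D).trace := by
    rw [hrr, hUU, Matrix.one_mul, Matrix.trace_mul_comm]
    simp only [Matrix.mul_assoc]
    rw [hUU, Matrix.mul_one]
  have hsum1 : ∑ i, hH.eigenvalues i = 1 := by
    have h := h1.symm.trans htr
    rw [htrD] at h
    have := congrArg Complex.re h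
    simpa [Complex.re_sum] using this
  have h3 : (D * D).trace = ∑ i, (((hH.eigenvalues i)^2 : ℝ) : ℂ) := by
    rw [hD, Matrix.diagonal_mul_diagonal, Matrix.trace_diagonal]
    congr 1; ext i
    simp [Function.comp_apply, pow_two]
  rw [h2, h3]
  rw [Complex.re_sum]
  calc (∑ i, (((hH.eigenvalues i)^2 : ℝ) : ℂ).re) = ∑ i, (hH.eigenvalues i)^2 := by
        simp [← Complex.ofReal_pow]
    _ ≤ (∑ i, hH.eigenvalues i)^2 :=
        Finset.sum_sq_le_sq_sum_of_nonneg (fun i _ => hpsd.eigenvalues_nonneg i)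
    _ = 1 := by rw [hsum1]; norm_num

set_option maxHeartbeats 1000000 in
/-- For an informationally complete (N,M)-POVM with efficiency
parameter x and any density matrix ρ,
Σ_{α,k} (tr(E_{α,k} ρ))² ≤ ((d−1)/d)·(d² + M²x)/(M(M−1)). -/
theorem coincidence_index_le (d N M : ℕ) (x : ℝ)
    (E : Fin N → Fin M → Matrix (Fin d) (Fin d) ℂ)
    (hE : IsNMPOVM d N M x E) (hIC : IsInfoComplete d N M)
    (ρ : Matrix (Fin d) (Fin d) ℂ) (hρ : IsDensityMatrix ρ) :
    ∑ α, ∑ k, ((E α k * ρ).trace.re) ^ 2 ≤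
      ((d : ℝ) - 1) / d * (((d : ℝ) ^ 2 + (M : ℝ) ^ 2 * x) / (M * ((M : ℝ) - 1))) := by
  obtain ⟨hpos, hsumE, htrE, hxE, hklE, habE, hxlo, hxhi⟩ := hE
  obtain ⟨hρpos, hρtr⟩ := hρ
  have hIC' : ((M : ℝ) - 1) * N = (d : ℝ) ^ 2 - 1 := hIC
  -- basic numeric facts
  have hx0 : 0 < x := lt_of_le_of_lt (by positivity) hxlo
  have hdM : 0 < (d : ℝ) / M := lt_of_lt_of_le hx0 (hxhi.trans (min_le_right _ _))
  have hd0 : 0 < (d : ℝ) := by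
    by_contra h
    push_neg at h
    have : (d : ℝ) = 0 := le_antisymm h (Nat.cast_nonneg d)
    rw [this] at hdM; simp at hdM
  have hM0 : 0 < (M : ℝ) := by
    by_contra h
    push_neg at h
    have : (M : ℝ) = 0 := le_antisymm h (Nat.cast_nonneg M)
    rw [this] at hdM; simp at hdM
  have hM2 : 2 ≤ M := by
    by_contra h
    push_neg at h
    interval_cases M
    · simp at hM0
    · have h1 : (d : ℝ) < x := by simpa using hxlo
      have h2 : x ≤ (d : ℝ) := by simpa using hxhi.trans (min_le_right _ _)
      linarith
  have hM1 : 1 < (M : ℝ) := by exact_mod_cast Nat.one_lt_cast.mpr hM2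
  have hd1 : 1 ≤ (d : ℝ) := by
    have : 0 < d := Nat.cast_pos.mp hd0
    exact_mod_cast this
  have hMne : (M : ℂ) ≠ 0 := by
    simp only [ne_eq, Nat.cast_eq_zero]
    intro h; rw [h] at hM0; simp at hM0
  have hdne : (d : ℂ) ≠ 0 := by
    simp only [ne_eq, Nat.cast_eq_zero]
    intro h; rw [h] at hd0; simp at hd0
  have hMneR : (M : ℝ) ≠ 0 := ne_of_gt hM0
  have hMne1 : ((M : ℝ) - 1) ≠ 0 := by linarith
  have hdneR : (d : ℝ) ≠ 0 := ne_of_gt hd0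
  -- definitions
  set F : Fin N → Fin M → Matrix (Fin d) (Fin d) ℂ :=
    fun α k => E α k - ((M:ℂ))⁻¹ • (1 : Matrix (Fin d) (Fin d) ℂ) with hF
  set v : Fin N → Fin M → ℝ := fun α k => (E α k * ρ).trace.re - 1/(M:ℝ) with hv
  set g : ℝ := x - (d:ℝ)/M^2 with hg
  set c : ℝ := g * M / ((M:ℝ) - 1) with hc
  have hg0 : 0 < g := by rw [hg]; linarith
  have hc0 : 0 < c := by
    rw [hc]
    exact div_pos (mul_pos hg0 hM0) (by linarith)
  -- hermiticity
  have hEh : ∀ α k, (E α k)ᴴ = E α k := fun α k => (hpos α k).1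
  have hρh : ρᴴ = ρ := hρpos.1
  have hFh : ∀ α k, (F α k)ᴴ = F α k := by
    intro α k
    simp [hF, Matrix.conjTranspose_sub, Matrix.conjTranspose_smul,
      Matrix.conjTranspose_one, star_inv₀, hEh]
  have htr1 : (1 : Matrix (Fin d) (Fin d) ℂ).trace = (d : ℂ) := by
    simp [Matrix.trace_one]
  -- F traceless
  have hFtr : ∀ α k, (F α k).trace = 0 := by
    intro α k
    simp [hF, Matrix.trace_sub, Matrix.trace_smul, htrE, htr1, smul_eq_mul]
    field_simp
    ring
  -- tr(Fρ) = v
  have hvtr : ∀ α k, (F α k * ρ).trace = ((v α k : ℝ) : ℂ) := by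
    intro α k
    have hreal := aux_trace_real (E α k) ρ (hEh α k) hρh
    simp [hF, Matrix.sub_mul, Matrix.smul_mul, Matrix.one_mul, Matrix.trace_sub,
      Matrix.trace_smul, hρtr, smul_eq_mul, hv]
    rw [hreal]
    simp
  -- sum of v over k is 0
  have hsumv : ∀ α, ∑ k, v α k = 0 := by
    intro α
    have h1 : ∑ k, ((E α k * ρ).trace) = 1 := by
      rw [← Matrix.trace_sum, ← Matrix.sum_mul, hsumE, Matrix.one_mul, hρtr]
    have h2 : ∑ k, ((E α k * ρ).trace.re) = 1 := by
      have := congrArg Complex.re h1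
      simpa [Complex.re_sum] using this
    simp only [hv]
    rw [Finset.sum_sub_distrib, h2, Finset.sum_const, Finset.card_univ, Fintype.card_fin,
      nsmul_eq_mul]
    field_simp
    ring
  -- Gram matrix of the F's
  have hFF : ∀ α k β l, (F α k * F β l).trace
      = (E α k * E β l).trace - (((d:ℝ)/M^2 : ℝ) : ℂ) := by
    intro α k β l
    simp only [hF, Matrix.sub_mul, Matrix.mul_sub, smul_mul_assoc,
      mul_smul_comm, Matrix.one_mul, Matrix.mul_one, Matrix.trace_sub,
      Matrix.trace_smul, htrE, htr1, smul_eq_mul, smul_smul]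
    push_cast
    field_simp
    ring
  have hMne1C : (M : ℂ) - 1 ≠ 0 := by
    intro h
    have h' : (M : ℂ) = 1 := by linear_combination h
    have : (M : ℝ) = 1 := by exact_mod_cast h'
    linarith
  have hGram : ∀ α k β l, (F α k * F β l).trace =
      (if α = β then (if k = l then ((g:ℝ) : ℂ) else ((-g/((M:ℝ)-1) : ℝ) : ℂ)) else 0) := by
    intro α k β l
    rw [hFF]
    by_cases hab : α = β
    · subst hab
      by_cases hkl : k = l
      · subst hkl
        rw [hxE, if_pos rfl, if_pos rfl, hg]
        push_cast
        ring
      · rw [hklE α k l hkl, if_pos rfl, if_neg hkl, hg]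
        push_cast
        field_simp
        ring
    · rw [habE α β k l hab, if_neg hab]
      push_cast
      ring
  -- the frame operator computation
  set B : Matrix (Fin d) (Fin d) ℂ := ∑ α, ∑ k, ((v α k : ℝ) : ℂ) • F α k with hB
  set T : ℝ := ∑ α, ∑ k, (v α k)^2 with hT
  have hBtr : B.trace = 0 := by
    simp [hB, Matrix.trace_sum, Matrix.trace_smul, hFtr]
  have hBρ : (B * ρ).trace = ((T : ℝ) : ℂ) := by
    simp only [hB, Matrix.sum_mul, smul_mul_assoc, Matrix.trace_sum, Matrix.trace_smul,
      hvtr, smul_eq_mul, hT]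
    push_cast
    refine Finset.sum_congr rfl fun α _ => ?_
    refine Finset.sum_congr rfl fun k _ => ?_
    ring
  have key : ∀ α k, ∑ β, ∑ l, ((v β l : ℝ) : ℂ) * (F α k * F β l).trace
      = ((c * v α k : ℝ) : ℂ) := by
    intro α k
    rw [Finset.sum_eq_single α]
    · have h1 : ∀ l, ((v α l : ℝ) : ℂ) * (F α k * F α l).trace
          = ((-g/((M:ℝ)-1) : ℝ) : ℂ) * (v α l : ℝ)
            + (if k = l then ((g - (-g/((M:ℝ)-1)) : ℝ) : ℂ) * (v α l : ℝ) else 0) := by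
        intro l
        rw [hGram, if_pos rfl]
        by_cases hkl : k = l
        · rw [if_pos hkl, if_pos hkl]; push_cast; ring
        · rw [if_neg hkl, if_neg hkl]; push_cast; ring
      rw [Finset.sum_congr rfl (fun l _ => h1 l)]
      rw [Finset.sum_add_distrib, ← Finset.mul_sum, Finset.sum_ite_eq Finset.univ k
        (fun l => ((g - (-g/((M:ℝ)-1)) : ℝ) : ℂ) * (v α l : ℝ)), if_pos (Finset.mem_univ k)]
      have h2 : ∑ l, ((v α l : ℝ) : ℂ) = 0 := by
        have h2' := congrArg (fun r : ℝ => (r : ℂ)) (hsumv α)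
        push_cast at h2'
        exact h2'
      rw [h2, mul_zero, zero_add]
      have h3 : (g - (-g/((M:ℝ)-1))) * (v α k) = c * v α k := by
        have h4 : g - (-g/((M:ℝ)-1)) = c := by
          rw [hc]; field_simp; ring
        rw [h4]
      rw [← h3]
      push_cast
      ring
    · intro β _ hβ
      apply Finset.sum_eq_zero
      intro l _
      rw [hGram, if_neg (Ne.symm hβ), mul_zero]
    · intro h; exact absurd (Finset.mem_univ α) h
  have hFB : ∀ α k, (F α k * B).trace = ((c * v α k : ℝ) : ℂ) := by
    intro α k
    rw [hB]
    simp only [Matrix.mul_sum, mul_smul_comm, Matrix.trace_sum, Matrix.trace_smul,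
      smul_eq_mul]
    exact key α k
  have hBB : (B * B).trace = ((c * T : ℝ) : ℂ) := by
    have expand : (B * B).trace = ∑ α, ∑ k, ((v α k : ℝ) : ℂ) * (F α k * B).trace := by
      nth_rewrite 1 [hB]
      simp only [Matrix.sum_mul, smul_mul_assoc, Matrix.trace_sum, Matrix.trace_smul,
        smul_eq_mul]
    rw [expand]
    rw [Finset.sum_congr rfl (fun α _ => Finset.sum_congr rfl (fun k _ => by rw [hFB α k]))]
    push_cast [hT, Finset.mul_sum]
    refine Finset.sum_congr rfl fun α _ => ?_
    refine Finset.sum_congr rfl fun k _ => ?_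
    ring
  have hBh : Bᴴ = B := by
    rw [hB]
    rw [Matrix.conjTranspose_sum]
    refine Finset.sum_congr rfl fun α _ => ?_
    rw [Matrix.conjTranspose_sum]
    refine Finset.sum_congr rfl fun k _ => ?_
    rw [Matrix.conjTranspose_smul, hFh, Complex.star_def, Complex.conj_ofReal]
  -- the positivity argument
  set ρ' : Matrix (Fin d) (Fin d) ℂ := ρ - ((d:ℂ))⁻¹ • 1 with hρ'
  set P : ℝ := (ρ * ρ).trace.re with hP
  have hρρ := aux_trace_real ρ ρ hρh hρh
  have hρ'ρ' : (ρ' * ρ').trace = ((P - 1/(d:ℝ) : ℝ) : ℂ) := by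
    simp only [hρ', Matrix.sub_mul, Matrix.mul_sub, smul_mul_assoc, mul_smul_comm,
      Matrix.one_mul, Matrix.mul_one, Matrix.trace_sub, Matrix.trace_smul, htr1, hρtr,
      smul_eq_mul, smul_smul]
    rw [hρρ, hP]
    push_cast
    field_simp
    ring
  have hBρ' : (B * ρ').trace = ((T : ℝ) : ℂ) := by
    simp only [hρ', Matrix.mul_sub, mul_smul_comm, Matrix.mul_one, Matrix.trace_sub,
      Matrix.trace_smul, hBtr, hBρ, smul_eq_mul, mul_zero, sub_zero]
  have hρ'B : (ρ' * B).trace = ((T : ℝ) : ℂ) := by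
    rw [Matrix.trace_mul_comm, hBρ']
  have hρ'h : ρ'ᴴ = ρ' := by
    simp [hρ', Matrix.conjTranspose_sub, Matrix.conjTranspose_smul,
      Matrix.conjTranspose_one, star_inv₀, hρh]
  set X : Matrix (Fin d) (Fin d) ℂ := B - ((c:ℝ):ℂ) • ρ' with hX
  have hXh : Xᴴ = X := by
    simp [hX, Matrix.conjTranspose_sub, Matrix.conjTranspose_smul, hBh, hρ'h,
      Complex.star_def, Complex.conj_ofReal]
  have hXX : (X * X).trace = ((c*T - 2*(c*T) + c^2*(P - 1/(d:ℝ)) : ℝ) : ℂ) := by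
    simp only [hX, Matrix.sub_mul, Matrix.mul_sub, smul_mul_assoc, mul_smul_comm,
      Matrix.trace_sub, Matrix.trace_smul, smul_smul, hBB, hBρ', hρ'B, hρ'ρ',
      smul_eq_mul]
    push_cast
    ring
  have h0 : (0:ℝ) ≤ c*T - 2*(c*T) + c^2*(P - 1/(d:ℝ)) := by
    have hnn := aux_trace_nonneg X
    rw [hXh, hXX] at hnn
    rwa [Complex.ofReal_re] at hnn
  have hPle : P ≤ 1 := aux_purity ρ hρpos hρtr
  have h5 : c * T ≤ c * (c * (1 - 1/(d:ℝ))) := by nlinarith [sq_nonneg c]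
  have hTle : T ≤ c * (1 - 1/(d:ℝ)) := le_of_mul_le_mul_left h5 hc0
  -- final accounting
  have hL : ∑ α, ∑ k, ((E α k * ρ).trace.re) ^ 2 = T + N/M := by
    have h1 : ∀ α k, ((E α k * ρ).trace.re) ^ 2
        = (v α k)^2 + (2/M) * v α k + 1/M^2 := by
      intro α k
      have h2 : (E α k * ρ).trace.re = v α k + 1/M := by
        rw [hv]; ring
      rw [h2]; field_simp; ring
    rw [Finset.sum_congr rfl (fun α _ => Finset.sum_congr rfl (fun k _ => h1 α k))]
    simp only [Finset.sum_add_distrib, Finset.sum_const, Finset.card_univ,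
      Fintype.card_fin, nsmul_eq_mul, ← Finset.mul_sum]
    have hz : ∑ α : Fin N, ∑ k : Fin M, v α k = 0 :=
      Finset.sum_eq_zero fun α _ => hsumv α
    rw [hz, ← hT, mul_zero, add_zero]
    field_simp
  have hN : (N:ℝ) = ((d:ℝ)^2 - 1)/((M:ℝ)-1) := by
    rw [eq_div_iff hMne1]; linear_combination hIC'
  have harith : c * (1 - 1/(d:ℝ)) + N/M
      = ((d : ℝ) - 1) / d * (((d : ℝ) ^ 2 + (M : ℝ) ^ 2 * x) / (M * ((M : ℝ) - 1))) := by
    rw [hc, hg, hN]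
    field_simp
    ring
  rw [hL]
  linarith
end

section
/- Let ρ_AB be a separable bipartite state on ℂ^{d_A} ⊗ ℂ^{d_B}, let {P^{(b_A)}_{n_A}} be a complete set of MUMs on ℂ^{d_A} with efficiency parameter κ_A and {Q^{(b_B)}_{n_B}} a complete set of MUMs on ℂ^{d_B} with efficiency parameter κ_B, and let J(ρ_AB) be the matrix with entries tr((P^{(b_A)}_{n_A} ⊗ Q^{(b_B)}_{n_B}) ρ_AB), where (n_A,b_A) indexes rows and (n_B,b_B) indexes columns. Then ‖J(ρ_AB)‖_tr ≤ √(κ_A + 1) · √(κ_B + 1). -/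
open scoped BigOperators ComplexOrder
open Matrix

open Kronecker

/-- Partial trace over the second factor. -/
noncomputable def ptraceB {dA dB : ℕ} (ρ : Matrix (Fin dA × Fin dB) (Fin dA × Fin dB) ℂ) :
    Matrix (Fin dA) (Fin dA) ℂ :=
  Matrix.of fun i j => ∑ k, ρ (i, k) (j, k)

/-- Partial trace over the first factor. -/
noncomputable def ptraceA {dA dB : ℕ} (ρ : Matrix (Fin dA × Fin dB) (Fin dA × Fin dB) ℂ) :
    Matrix (Fin dB) (Fin dB) ℂ :=
  Matrix.of fun i j => ∑ k, ρ (k, i) (k, j)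

/-- A bipartite state is separable if it is a finite convex combination of
tensor products of local density matrices. -/
def SeparableState {dA dB : ℕ} (ρ : Matrix (Fin dA × Fin dB) (Fin dA × Fin dB) ℂ) : Prop :=
  ∃ (K : ℕ) (p : Fin K → ℝ) (ρA : Fin K → Matrix (Fin dA) (Fin dA) ℂ)
    (ρB : Fin K → Matrix (Fin dB) (Fin dB) ℂ),
    (∀ i, 0 ≤ p i) ∧ (∑ i, p i = 1) ∧
    (∀ i, IsDensityMatrix (ρA i)) ∧ (∀ i, IsDensityMatrix (ρB i)) ∧
    ρ = ∑ i, (p i : ℂ) • (ρA i ⊗ₖ ρB i)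
/-- A complete set of d+1 mutually unbiased measurements (MUMs) on ℂ^d with
efficiency parameter κ. -/
def IsMUMs (d : ℕ) (κ : ℝ) (P : Fin (d + 1) → Fin d → Matrix (Fin d) (Fin d) ℂ) : Prop :=
  (∀ b n, (P b n).PosSemidef) ∧ (∀ b, ∑ n, P b n = 1) ∧
  (∀ b n, (P b n).trace = 1) ∧
  (∀ b n, (P b n * P b n).trace = (κ : ℂ)) ∧
  (∀ b n n', n ≠ n' → (P b n * P b n').trace = (((1 - κ) / ((d : ℝ) - 1) : ℝ) : ℂ)) ∧
  (∀ b b' n n', b ≠ b' → (P b n * P b' n').trace = ((1 / (d : ℝ) : ℝ) : ℂ)) ∧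
  (1 / (d : ℝ) < κ ∧ κ ≤ 1)

lemma traceNorm_eq_sum_sqrt {m n : Type*} [Fintype m] [Fintype n] [DecidableEq n]
    (X : Matrix m n ℂ) :
    traceNorm X = ∑ k, Real.sqrt ((Matrix.posSemidef_conjTranspose_mul_self X).1.eigenvalues k) := by
  unfold traceNorm
  rw [Matrix.trace_mul_cycle,
    Unitary.coe_star_mul_self, Matrix.one_mul, Matrix.trace_diagonal]
  simp [Complex.ofReal_re]

lemma traceNorm_sum_rank_one {ι m n : Type*} [Fintype ι] [Fintype m] [Fintype n]
    [DecidableEq n]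
    (c : ι → ℝ) (hc : ∀ i, 0 ≤ c i)
    (u : ι → EuclideanSpace ℂ m) (w : ι → EuclideanSpace ℂ n) :
    traceNorm (Matrix.of fun a b => ∑ i, (c i : ℂ) * u i a * w i b) ≤
      ∑ i, c i * (‖u i‖ * ‖w i‖) := by
  classical
  set X : Matrix m n ℂ := Matrix.of (fun a b => ∑ i, (c i : ℂ) * u i a * w i b) with hX
  have hH := Matrix.posSemidef_conjTranspose_mul_self X
  have hlam0 : ∀ k, 0 ≤ hH.1.eigenvalues k := hH.eigenvalues_nonneg
  set lam : n → ℝ := fun k => hH.1.eigenvalues k with hlam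
  set B := hH.1.eigenvectorBasis with hB
  set g : n → EuclideanSpace ℂ m := fun k => (WithLp.equiv 2 (m → ℂ)).symm (X *ᵥ (B k)) with hg
  have hgapp : ∀ k a, g k a = ∑ i, (c i : ℂ) * (∑ b, w i b * B k b) * u i a := by
    intro k a
    show (X *ᵥ ⇑(B k)) a = _
    simp only [Matrix.mulVec, dotProduct, hX, Matrix.of_apply, Finset.sum_mul]
    rw [Finset.sum_comm]
    refine Finset.sum_congr rfl fun i _ => ?_
    rw [Finset.mul_sum, Finset.sum_mul]
    refine Finset.sum_congr rfl fun b _ => ?_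
    show (c i : ℂ) * u i a * w i b * B k b = _
    ring
  have hinner : ∀ j k, (inner ℂ (g j) (g k) : ℂ) = if j = k then (lam k : ℂ) else 0 := by
    intro j k
    have h1 : (inner ℂ (g j) (g k) : ℂ) = star (⇑(B j)) ⬝ᵥ ((Xᴴ * X) *ᵥ ⇑(B k)) := by
      simp only [hg, PiLp.inner_apply, RCLike.inner_apply]
      rw [← Matrix.mulVec_mulVec, Matrix.dotProduct_mulVec, ← Matrix.star_mulVec]
      simp only [dotProduct]
      refine Finset.sum_congr rfl fun x _ => ?_
      rw [mul_comm]
      rfl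
    rw [h1, Matrix.IsHermitian.mulVec_eigenvectorBasis]
    have h2 : star (⇑(B j)) ⬝ᵥ (fun a => (lam k : ℝ) • (⇑(B k)) a) =
        (lam k : ℂ) * (inner ℂ (B j) (B k) : ℂ) := by
      simp only [dotProduct, PiLp.inner_apply, RCLike.inner_apply, Pi.star_apply,
        smul_eq_mul, Finset.mul_sum]
      refine Finset.sum_congr rfl fun a _ => ?_
      simp [Complex.real_smul]
      ring
    rw [show ((lam k : ℝ) • ⇑(B k)) = (fun a => (lam k : ℝ) • (⇑(B k)) a) from rfl, h2,
      orthonormal_iff_ite.mp B.orthonormal]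
    by_cases h : j = k <;> simp [h]
  -- nonzero eigenvalue set
  set S : Finset n := Finset.univ.filter (fun k => lam k ≠ 0) with hS
  set f : {k // k ∈ S} → EuclideanSpace ℂ m :=
    fun k => (((Real.sqrt (lam k.1) : ℝ) : ℂ))⁻¹ • g k.1 with hf
  have hSlam : ∀ k : {k // k ∈ S}, 0 < lam k.1 := fun k =>
    lt_of_le_of_ne (hlam0 _) (Ne.symm (Finset.mem_filter.mp k.2).2)
  have hsqrtpos : ∀ k : {k // k ∈ S}, 0 < Real.sqrt (lam k.1) := fun k =>
    Real.sqrt_pos.mpr (hSlam k)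
  have hconj : ∀ k : {k // k ∈ S},
      (starRingEnd ℂ) ((((Real.sqrt (lam k.1) : ℝ) : ℂ))⁻¹) =
        (((Real.sqrt (lam k.1) : ℝ) : ℂ))⁻¹ := by
    intro k
    rw [← Complex.ofReal_inv, Complex.conj_ofReal]
  have hforth : Orthonormal ℂ f := by
    rw [orthonormal_iff_ite]
    intro j k
    rw [hf]
    simp only [inner_smul_left, inner_smul_right]
    rw [show (inner ℂ (g j.1) (g k.1) : ℂ) = _ from hinner j.1 k.1, hconj j]
    rcases eq_or_ne j k with h | h
    · subst h
      rw [if_pos rfl, if_pos rfl]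
      have hr : (Real.sqrt (lam j.1))⁻¹ * ((Real.sqrt (lam j.1))⁻¹ * lam j.1) = 1 := by
        rw [← mul_assoc, ← mul_inv, Real.mul_self_sqrt (hSlam j).le,
          inv_mul_cancel₀ (ne_of_gt (hSlam j))]
      exact_mod_cast hr
    · rw [if_neg (fun hh => h (Subtype.ext hh)), if_neg h]
      simp
  have hfg : ∀ k : {k // k ∈ S}, (inner ℂ (f k) (g k.1) : ℂ) = ((Real.sqrt (lam k.1) : ℝ) : ℂ) := by
    intro k
    rw [hf]
    simp only [inner_smul_left]
    rw [show (inner ℂ (g k.1) (g k.1) : ℂ) = _ from hinner k.1 k.1, if_pos rfl, hconj k]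
    have hr : (Real.sqrt (lam k.1))⁻¹ * lam k.1 = Real.sqrt (lam k.1) := by
      nth_rewrite 2 [← Real.mul_self_sqrt (hSlam k).le]
      rw [← mul_assoc, inv_mul_cancel₀ (ne_of_gt (hsqrtpos k)), one_mul]
    exact_mod_cast hr
  set t : ι → n → ℂ := fun i k => ∑ b, w i b * B k b with ht
  have hgvec : ∀ k : n, g k = ∑ i, ((c i : ℂ) * t i k) • u i := by
    intro k
    ext a
    rw [hgapp k a]
    rw [show (∑ i, ((c i : ℂ) * t i k) • u i) a = ∑ i, (((c i : ℂ) * t i k) • u i) a from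
      by rw [WithLp.ofLp_sum]; exact Finset.sum_apply a Finset.univ _]
    refine Finset.sum_congr rfl fun i _ => ?_
    simp [ht, smul_eq_mul]
  have hexp : ∀ k : {k // k ∈ S}, ((Real.sqrt (lam k.1) : ℝ) : ℂ) =
      ∑ i, (c i : ℂ) * t i k.1 * (inner ℂ (f k) (u i) : ℂ) := by
    intro k
    rw [← hfg k, hgvec k.1, inner_sum]
    refine Finset.sum_congr rfl fun i _ => ?_
    rw [inner_smul_right]
  have hkey : ∀ k : {k // k ∈ S}, Real.sqrt (lam k.1) ≤
      ∑ i, c i * (‖(inner ℂ (f k) (u i) : ℂ)‖ * ‖t i k.1‖) := by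
    intro k
    have h1 : Real.sqrt (lam k.1) =
        (∑ i, (c i : ℂ) * t i k.1 * (inner ℂ (f k) (u i) : ℂ)).re := by
      rw [← hexp k, Complex.ofReal_re]
    rw [h1]
    calc (∑ i, (c i : ℂ) * t i k.1 * (inner ℂ (f k) (u i) : ℂ)).re
        ≤ ‖∑ i, (c i : ℂ) * t i k.1 * (inner ℂ (f k) (u i) : ℂ)‖ := Complex.re_le_norm _
      _ ≤ ∑ i, ‖(c i : ℂ) * t i k.1 * (inner ℂ (f k) (u i) : ℂ)‖ := norm_sum_le _ _
      _ = ∑ i, c i * (‖(inner ℂ (f k) (u i) : ℂ)‖ * ‖t i k.1‖) := by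
          refine Finset.sum_congr rfl fun i _ => ?_
          rw [norm_mul, norm_mul, Complex.norm_real, Real.norm_eq_abs, abs_of_nonneg (hc i)]
          ring
  -- Parseval-type bound for t
  set w' : ι → EuclideanSpace ℂ n := fun i => WithLp.toLp 2 (fun b => (starRingEnd ℂ) (w i b)) with hw'
  have htw : ∀ i k, t i k = (inner ℂ (w' i) (B k) : ℂ) := by
    intro i k
    simp only [ht, PiLp.inner_apply, RCLike.inner_apply, hw']
    exact Finset.sum_congr rfl fun b _ => by simp; ring
  have hnw' : ∀ i, ‖w' i‖ = ‖w i‖ := by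
    intro i
    simp only [EuclideanSpace.norm_eq]
    congr 1
    exact Finset.sum_congr rfl fun b _ => by simp [hw']
  have htbound : ∀ i, ∑ k ∈ S.attach, ‖t i k.1‖ ^ 2 ≤ ‖w i‖ ^ 2 := by
    intro i
    have h1 : ∑ k ∈ S.attach, ‖t i k.1‖ ^ 2 = ∑ k ∈ S, ‖t i k‖ ^ 2 :=
      Finset.sum_attach S (fun k => ‖t i k‖ ^ 2)
    rw [h1]
    have h2 : ∑ k ∈ S, ‖t i k‖ ^ 2 ≤ ∑ k, ‖t i k‖ ^ 2 :=
      Finset.sum_le_sum_of_subset_of_nonneg (Finset.subset_univ S)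
        (fun k _ _ => by positivity)
    refine h2.trans ?_
    calc ∑ k, ‖t i k‖ ^ 2
        = ∑ k, ‖(inner ℂ (B k) (w' i) : ℂ)‖ ^ 2 :=
          Finset.sum_congr rfl (fun k _ => by rw [htw i k, norm_inner_symm])
      _ ≤ ‖w' i‖ ^ 2 := B.orthonormal.sum_inner_products_le (w' i)
      _ = ‖w i‖ ^ 2 := by rw [hnw' i]
  -- Bessel bound for u
  have hubound : ∀ i, ∑ k ∈ S.attach, ‖(inner ℂ (f k) (u i) : ℂ)‖ ^ 2 ≤ ‖u i‖ ^ 2 :=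
    fun i => hforth.sum_inner_products_le (u i)
  -- assemble
  rw [traceNorm_eq_sum_sqrt]
  have hstep0 : ∑ k, Real.sqrt ((Matrix.posSemidef_conjTranspose_mul_self X).1.eigenvalues k)
      = ∑ k ∈ S, Real.sqrt (lam k) := by
    refine (Finset.sum_subset (Finset.subset_univ S) fun k _ hk => ?_).symm
    have : lam k = 0 := by
      by_contra h
      exact hk (Finset.mem_filter.mpr ⟨Finset.mem_univ _, h⟩)
    show Real.sqrt (lam k) = 0
    simp [this]
  rw [hstep0, ← Finset.sum_attach S (fun k => Real.sqrt (lam k))]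
  calc ∑ k ∈ S.attach, Real.sqrt (lam k.1)
      ≤ ∑ k ∈ S.attach, ∑ i, c i * (‖(inner ℂ (f k) (u i) : ℂ)‖ * ‖t i k.1‖) :=
        Finset.sum_le_sum fun k _ => hkey k
    _ = ∑ i, ∑ k ∈ S.attach, c i * (‖(inner ℂ (f k) (u i) : ℂ)‖ * ‖t i k.1‖) :=
        Finset.sum_comm
    _ ≤ ∑ i, c i * (‖u i‖ * ‖w i‖) := by
        refine Finset.sum_le_sum fun i _ => ?_
        rw [← Finset.mul_sum]
        refine mul_le_mul_of_nonneg_left ?_ (hc i)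
        calc ∑ k ∈ S.attach, ‖(inner ℂ (f k) (u i) : ℂ)‖ * ‖t i k.1‖
            ≤ Real.sqrt (∑ k ∈ S.attach, ‖(inner ℂ (f k) (u i) : ℂ)‖ ^ 2) *
              Real.sqrt (∑ k ∈ S.attach, ‖t i k.1‖ ^ 2) :=
              Real.sum_mul_le_sqrt_mul_sqrt _ _ _
          _ ≤ ‖u i‖ * ‖w i‖ := by
              have h1 : Real.sqrt (∑ k ∈ S.attach, ‖(inner ℂ (f k) (u i) : ℂ)‖ ^ 2) ≤ ‖u i‖ := by
                refine Real.sqrt_le_sqrt (hubound i) |>.trans ?_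
                rw [Real.sqrt_sq (norm_nonneg _)]
              have h2 : Real.sqrt (∑ k ∈ S.attach, ‖t i k.1‖ ^ 2) ≤ ‖w i‖ := by
                refine Real.sqrt_le_sqrt (htbound i) |>.trans ?_
                rw [Real.sqrt_sq (norm_nonneg _)]
              exact mul_le_mul h1 h2 (Real.sqrt_nonneg _) (norm_nonneg _)

lemma trace_sq_re_nonneg {n : Type*} [Fintype n] (Z : Matrix n n ℂ)
    (hZ : Z.IsHermitian) : 0 ≤ (Z * Z).trace.re := by
  have h : Z * Z = Zᴴ * Z := by rw [hZ]
  rw [h]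
  have hexp : (Zᴴ * Z).trace = ∑ i, ∑ j, (starRingEnd ℂ) (Z j i) * Z j i := by
    simp [Matrix.trace, Matrix.diag, Matrix.mul_apply, Matrix.conjTranspose_apply]
  rw [hexp, Complex.re_sum]
  refine Finset.sum_nonneg fun i _ => ?_
  rw [Complex.re_sum]
  refine Finset.sum_nonneg fun j _ => ?_
  rw [mul_comm, Complex.mul_conj]
  simp [Complex.normSq_nonneg]

lemma herm_mul_trace_real {n : Type*} [Fintype n] {A B : Matrix n n ℂ}
    (hA : A.IsHermitian) (hB : B.IsHermitian) :
    (A * B).trace = (((A * B).trace.re : ℝ) : ℂ) := by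
  rw [eq_comm, ← Complex.conj_eq_iff_re]
  calc (starRingEnd ℂ) ((A * B).trace) = ((A * B)ᴴ).trace := by
        rw [Matrix.trace_conjTranspose]; rfl
    _ = (A * B).trace := by rw [Matrix.conjTranspose_mul, hA, hB, Matrix.trace_mul_comm]

lemma trace_sq_le_one {n : Type*} [Fintype n] [DecidableEq n] {ρ : Matrix n n ℂ}
    (hρ : ρ.PosSemidef) (h1 : ρ.trace = 1) : (ρ * ρ).trace.re ≤ 1 := by
  have hH := hρ.1
  have key : (star hH.eigenvectorUnitary.1 : Matrix n n ℂ) * hH.eigenvectorUnitary.1 = 1 := by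
    exact Unitary.coe_star_mul_self _
  have htr : ρ.trace = ∑ k, (hH.eigenvalues k : ℂ) := by
    conv_lhs => rw [hH.spectral_theorem, Unitary.conjStarAlgAut_apply]
    rw [Matrix.trace_mul_cycle, key, Matrix.one_mul, Matrix.trace_diagonal]
    rfl
  have hsq : ρ * ρ = hH.eigenvectorUnitary.1 *
      (Matrix.diagonal (RCLike.ofReal ∘ hH.eigenvalues) *
       Matrix.diagonal (RCLike.ofReal ∘ hH.eigenvalues)) * star hH.eigenvectorUnitary.1 := by
    conv_lhs => rw [hH.spectral_theorem, Unitary.conjStarAlgAut_apply]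
    simp only [Matrix.mul_assoc]
    rw [show (star hH.eigenvectorUnitary.1 : Matrix n n ℂ) *
        (hH.eigenvectorUnitary.1 * (Matrix.diagonal (RCLike.ofReal ∘ hH.eigenvalues) *
          star hH.eigenvectorUnitary.1)) = Matrix.diagonal (RCLike.ofReal ∘ hH.eigenvalues) *
          star hH.eigenvectorUnitary.1 from by rw [← Matrix.mul_assoc, key, Matrix.one_mul]]
  have htr2 : (ρ * ρ).trace = ∑ k, ((hH.eigenvalues k : ℝ) ^ 2 : ℝ) := by
    rw [hsq, Matrix.trace_mul_cycle, key, Matrix.one_mul,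
      Matrix.diagonal_mul_diagonal, Matrix.trace_diagonal]
    push_cast
    simp [Function.comp, sq]
  have hsum : ∑ k, hH.eigenvalues k = 1 := by
    have := htr.symm.trans h1
    exact_mod_cast this
  have hnn : ∀ k, 0 ≤ hH.eigenvalues k := hρ.eigenvalues_nonneg
  rw [htr2]
  push_cast
  rw [Complex.re_sum]
  have : ∀ k : n, (((hH.eigenvalues k : ℝ) ^ 2 : ℂ)).re = hH.eigenvalues k ^ 2 := by
    intro k; norm_cast
  calc ∑ k, (((hH.eigenvalues k : ℝ) ^ 2 : ℂ)).re = ∑ k, hH.eigenvalues k ^ 2 :=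
        Finset.sum_congr rfl fun k _ => this k
    _ ≤ ∑ k, hH.eigenvalues k := by
        refine Finset.sum_le_sum fun k _ => ?_
        have hle : hH.eigenvalues k ≤ 1 := by
          rw [← hsum]
          exact Finset.single_le_sum (fun j _ => hnn j) (Finset.mem_univ k)
        nlinarith [hnn k]
    _ = 1 := hsum

lemma MUM_sum_sq_le {d : ℕ} (hd : 2 ≤ d) {κ : ℝ}
    {P : Fin (d + 1) → Fin d → Matrix (Fin d) (Fin d) ℂ} (hP : IsMUMs d κ P)
    {ρ : Matrix (Fin d) (Fin d) ℂ} (hρ : IsDensityMatrix ρ) :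
    ∑ b, ∑ n, ((P b n * ρ).trace).re ^ 2 ≤ κ + 1 := by
  obtain ⟨hpsd, hPsum, htr1, hself, hoff, hdiff, hκgt, hκle⟩ := hP
  set δ : ℝ := (d : ℝ) with hδ
  have hδ2 : (2 : ℝ) ≤ δ := by rw [hδ]; exact_mod_cast hd
  have hδ0 : 0 < δ := by linarith
  have hδ1 : 0 < δ - 1 := by linarith
  have hκd : 1 < κ * δ := by
    have := (div_lt_iff₀ hδ0).mp hκgt
    linarith
  set γ : ℝ := (κ * δ - 1) / (δ - 1) with hγ
  have hγ0 : 0 < γ := div_pos (by linarith) hδ1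
  set t : Fin (d + 1) → Fin d → ℝ := fun b n => ((P b n * ρ).trace).re with hT
  have hreal : ∀ b n, (P b n * ρ).trace = ((t b n : ℝ) : ℂ) := fun b n =>
    herm_mul_trace_real (hpsd b n).1 hρ.1.1
  set a : Fin (d + 1) → Fin d → ℝ := fun b n => t b n - 1 / δ with hA
  have hsumt : ∀ b, ∑ n, t b n = 1 := by
    intro b
    have h1 : ∑ n, (P b n * ρ).trace = 1 := by
      rw [← Matrix.trace_sum, ← Matrix.sum_mul, hPsum b, Matrix.one_mul, hρ.2]
    have h2 : ((∑ n, t b n : ℝ) : ℂ) = 1 := by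
      push_cast
      rw [← h1]
      exact Finset.sum_congr rfl fun n _ => (hreal b n).symm
    exact_mod_cast h2
  have hsuma : ∀ b, ∑ n, a b n = 0 := by
    intro b
    simp only [hA, Finset.sum_sub_distrib, hsumt b, Finset.sum_const, Finset.card_univ,
      Fintype.card_fin, nsmul_eq_mul]
    field_simp
    simp [hδ]
  set s : ℂ := ((1 / δ : ℝ) : ℂ) with hs
  set F : Fin (d + 1) → Fin d → Matrix (Fin d) (Fin d) ℂ := fun b n => P b n - s • 1 with hF
  set Δ : Matrix (Fin d) (Fin d) ℂ := ρ - s • 1 with hΔ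
  have hcard : ((Fintype.card (Fin d) : ℕ) : ℂ) = ((δ : ℝ) : ℂ) := by
    push_cast [Fintype.card_fin]; rfl
  have htrone : (1 : Matrix (Fin d) (Fin d) ℂ).trace = ((δ : ℝ) : ℂ) := by
    rw [Matrix.trace_one, hcard]
  have hssd : s * ((δ : ℝ) : ℂ) = 1 := by
    rw [hs, ← Complex.ofReal_mul]
    norm_num
    field_simp
  have e3 : ((s • 1 : Matrix (Fin d) (Fin d) ℂ) * (s • 1)).trace = s := by
    rw [Matrix.smul_mul, Matrix.one_mul, Matrix.trace_smul, Matrix.trace_smul, htrone,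
      smul_eq_mul, smul_eq_mul, hssd, mul_one]
  -- trace of Δ * F
  have htrΔF : ∀ b n, (Δ * F b n).trace = ((a b n : ℝ) : ℂ) := by
    intro b n
    have e1 : (ρ * (s • 1)).trace = s := by
      rw [Matrix.mul_smul, Matrix.mul_one, Matrix.trace_smul, hρ.2, smul_eq_mul, mul_one]
    have e2 : ((s • 1 : Matrix (Fin d) (Fin d) ℂ) * P b n).trace = s := by
      rw [Matrix.smul_mul, Matrix.one_mul, Matrix.trace_smul, htr1 b n, smul_eq_mul, mul_one]
    rw [hΔ, hF, Matrix.sub_mul, Matrix.mul_sub, Matrix.mul_sub, Matrix.trace_sub,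
      Matrix.trace_sub, Matrix.trace_sub, e1, e2, e3, Matrix.trace_mul_comm ρ (P b n),
      hreal b n]
    rw [hA, hs]
    push_cast
    ring
  have htrFF : ∀ b n b' n', (F b n * F b' n').trace = (P b n * P b' n').trace - s := by
    intro b n b' n'
    have e1 : (P b n * (s • 1)).trace = s := by
      rw [Matrix.mul_smul, Matrix.mul_one, Matrix.trace_smul, htr1 b n, smul_eq_mul, mul_one]
    have e2 : ((s • 1 : Matrix (Fin d) (Fin d) ℂ) * P b' n').trace = s := by
      rw [Matrix.smul_mul, Matrix.one_mul, Matrix.trace_smul, htr1 b' n', smul_eq_mul, mul_one]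
    rw [hF, Matrix.sub_mul, Matrix.mul_sub, Matrix.mul_sub, Matrix.trace_sub,
      Matrix.trace_sub, Matrix.trace_sub, e1, e2, e3]
    ring
  have hFFval : ∀ b n b' n', (F b n * F b' n').trace =
      if b = b' then (if n = n' then ((κ - 1/δ : ℝ) : ℂ) else (((1-κ)/(δ-1) - 1/δ : ℝ) : ℂ))
      else 0 := by
    intro b n b' n'
    rw [htrFF]
    by_cases hb : b = b'
    · subst hb
      by_cases hn : n = n'
      · subst hn
        rw [hself, if_pos rfl, if_pos rfl, hs]
        push_cast
        ring
      · rw [hoff _ _ _ hn, if_pos rfl, if_neg hn, hs]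
        push_cast
        ring
    · rw [hdiff _ _ _ _ hb, if_neg hb, hs]
      push_cast
      ring
  set Sa : ℝ := ∑ b, ∑ n, a b n ^ 2 with hSa
  set W : Matrix (Fin d) (Fin d) ℂ := ∑ b, ∑ n, ((a b n / γ : ℝ) : ℂ) • F b n with hW
  have htrΔW : (Δ * W).trace = ((Sa / γ : ℝ) : ℂ) := by
    rw [hW]
    simp only [Matrix.mul_sum, Matrix.mul_smul, Matrix.trace_sum, Matrix.trace_smul,
      smul_eq_mul]
    have : ∀ b : Fin (d+1), ∀ n : Fin d,
        ((a b n / γ : ℝ) : ℂ) * (Δ * F b n).trace = ((a b n ^ 2 / γ : ℝ) : ℂ) := by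
      intro b n
      rw [htrΔF b n, ← Complex.ofReal_mul]
      congr 1
      field_simp
    rw [Finset.sum_congr rfl fun b _ => Finset.sum_congr rfl fun n _ => this b n, hSa]
    push_cast
    simp only [Finset.sum_div]
  have hksplit : ∀ (c : Fin d → ℝ), (∑ n, c n = 0) → ∀ (k1 k2 : ℂ),
      (∑ n, ∑ n', (((c n : ℝ) : ℂ) * ((c n' : ℝ) : ℂ)) * (if n = n' then k1 else k2))
        = (k1 - k2) * ((∑ n, (c n)^2 : ℝ) : ℂ) := by
    intro c hc0 k1 k2
    have hcsum : (∑ n', ((c n' : ℝ) : ℂ)) = 0 := by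
      rw [← Complex.ofReal_sum, hc0, Complex.ofReal_zero]
    have hrow : ∀ n, (∑ n', ((c n' : ℝ) : ℂ) * (if n = n' then k1 else k2))
        = (k1 - k2) * ((c n : ℝ) : ℂ) := by
      intro n
      have hterm : ∀ n', ((c n' : ℝ) : ℂ) * (if n = n' then k1 else k2)
          = (if n = n' then (k1 - k2) * ((c n' : ℝ) : ℂ) else 0) + k2 * ((c n' : ℝ) : ℂ) := by
        intro n'
        by_cases h : n = n'
        · simp only [if_pos h]; ring
        · simp only [if_neg h]; ring
      rw [Finset.sum_congr rfl fun n' _ => hterm n', Finset.sum_add_distrib,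
        Finset.sum_ite_eq Finset.univ n (fun n' => (k1 - k2) * ((c n' : ℝ) : ℂ)),
        if_pos (Finset.mem_univ n), ← Finset.mul_sum, hcsum, mul_zero, add_zero]
    calc ∑ n, ∑ n', (((c n : ℝ) : ℂ) * ((c n' : ℝ) : ℂ)) * (if n = n' then k1 else k2)
        = ∑ n, ((c n : ℝ) : ℂ) * ∑ n', ((c n' : ℝ) : ℂ) * (if n = n' then k1 else k2) := by
          refine Finset.sum_congr rfl fun n _ => ?_
          rw [Finset.mul_sum]
          exact Finset.sum_congr rfl fun n' _ => by ring
      _ = ∑ n, ((c n : ℝ) : ℂ) * ((k1 - k2) * ((c n : ℝ) : ℂ)) :=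
          Finset.sum_congr rfl fun n _ => by rw [hrow n]
      _ = (k1 - k2) * ((∑ n, (c n)^2 : ℝ) : ℂ) := by
          push_cast
          rw [Finset.mul_sum]
          exact Finset.sum_congr rfl fun n _ => by ring
  have hgamma : (((κ - 1/δ : ℝ) : ℂ) - (((1-κ)/(δ-1) - 1/δ : ℝ) : ℂ)) = ((γ : ℝ) : ℂ) := by
    rw [← Complex.ofReal_sub]
    congr 1
    rw [hγ]
    field_simp
    ring
  have htrWW : (W * W).trace = ((Sa / γ : ℝ) : ℂ) := by
    have hWW : (W * W).trace = ∑ b, ∑ n, ∑ b', ∑ n',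
        (((a b n / γ : ℝ) : ℂ) * ((a b' n' / γ : ℝ) : ℂ)) * (F b n * F b' n').trace := by
      rw [hW]
      simp only [Matrix.sum_mul, Matrix.mul_sum, Matrix.smul_mul, Matrix.mul_smul,
        Matrix.trace_sum, Matrix.trace_smul, smul_smul, smul_eq_mul]
      refine Finset.sum_congr rfl fun b _ => Finset.sum_congr rfl fun n _ => ?_
      rw [Finset.mul_sum]
      refine Finset.sum_congr rfl fun b' _ => ?_
      rw [Finset.mul_sum]
      refine Finset.sum_congr rfl fun n' _ => ?_
      rw [Matrix.trace_mul_comm]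
      ring
    rw [hWW]
    have hswap : ∀ b : Fin (d+1), (∑ n, ∑ b', ∑ n',
        (((a b n / γ : ℝ) : ℂ) * ((a b' n' / γ : ℝ) : ℂ)) * (F b n * F b' n').trace)
        = ∑ b', ∑ n, ∑ n',
        (((a b n / γ : ℝ) : ℂ) * ((a b' n' / γ : ℝ) : ℂ)) * (F b n * F b' n').trace := by
      intro b
      exact Finset.sum_comm
    rw [Finset.sum_congr rfl fun b _ => hswap b]
    have hdiag : ∀ b b', (∑ n, ∑ n',
        (((a b n / γ : ℝ) : ℂ) * ((a b' n' / γ : ℝ) : ℂ)) * (F b n * F b' n').trace)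
        = if b = b' then ((γ : ℝ) : ℂ) * ((∑ n, (a b n / γ)^2 : ℝ) : ℂ) else 0 := by
      intro b b'
      by_cases hb : b = b'
      · subst hb
        rw [if_pos rfl]
        have hk := hksplit (fun n => a b n / γ)
            (by rw [← Finset.sum_div, hsuma b, zero_div])
            ((κ - 1/δ : ℝ) : ℂ) (((1-κ)/(δ-1) - 1/δ : ℝ) : ℂ)
        calc ∑ n, ∑ n', (((a b n / γ : ℝ) : ℂ) * ((a b n' / γ : ℝ) : ℂ)) * (F b n * F b n').trace
            = ∑ n, ∑ n', (((a b n / γ : ℝ) : ℂ) * ((a b n' / γ : ℝ) : ℂ)) *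
              (if n = n' then ((κ - 1/δ : ℝ) : ℂ) else (((1-κ)/(δ-1) - 1/δ : ℝ) : ℂ)) := by
              refine Finset.sum_congr rfl fun n _ => Finset.sum_congr rfl fun n' _ => ?_
              rw [hFFval b n b n', if_pos rfl]
          _ = (((κ - 1/δ : ℝ) : ℂ) - (((1-κ)/(δ-1) - 1/δ : ℝ) : ℂ)) *
              ((∑ n, (a b n / γ)^2 : ℝ) : ℂ) := hk
          _ = ((γ : ℝ) : ℂ) * ((∑ n, (a b n / γ)^2 : ℝ) : ℂ) := by rw [hgamma]
      · rw [if_neg hb]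
        refine Finset.sum_eq_zero fun n _ => Finset.sum_eq_zero fun n' _ => ?_
        rw [hFFval b n b' n', if_neg hb, mul_zero]
    rw [Finset.sum_congr rfl fun b _ => Finset.sum_congr rfl fun b' _ => hdiag b b']
    rw [Finset.sum_congr rfl fun b _ => Finset.sum_ite_eq Finset.univ b
      (fun _ => ((γ : ℝ) : ℂ) * ((∑ n, (a b n / γ)^2 : ℝ) : ℂ))]
    simp only [if_pos (Finset.mem_univ _)]
    have hrealid : ∑ b, γ * (∑ n, (a b n / γ)^2) = Sa / γ := by
      rw [hSa, Finset.sum_div]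
      refine Finset.sum_congr rfl fun b _ => ?_
      rw [Finset.mul_sum, Finset.sum_div]
      refine Finset.sum_congr rfl fun n _ => ?_
      rw [div_pow]
      field_simp
    calc ∑ b, ((γ : ℝ) : ℂ) * ((∑ n, (a b n / γ)^2 : ℝ) : ℂ)
        = ((∑ b, γ * (∑ n, (a b n / γ)^2) : ℝ) : ℂ) := by push_cast; rfl
      _ = ((Sa / γ : ℝ) : ℂ) := by rw [hrealid]
  set Z : Matrix (Fin d) (Fin d) ℂ := Δ - W with hZ
  have hZherm : Z.IsHermitian := by
    have hPh : ∀ b n, (P b n)ᴴ = P b n := fun b n => (hpsd b n).1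
    have hρh : ρᴴ = ρ := hρ.1.1
    show Zᴴ = Z
    simp only [hZ, hΔ, hW, hF, hs, Matrix.conjTranspose_sub, Matrix.conjTranspose_sum,
      Matrix.conjTranspose_smul, Matrix.conjTranspose_one, hρh, hPh, Complex.star_def,
      Complex.conj_ofReal]
  have e2ρ : ((s • 1 : Matrix (Fin d) (Fin d) ℂ) * ρ).trace = s := by
    rw [Matrix.smul_mul, Matrix.one_mul, Matrix.trace_smul, hρ.2, smul_eq_mul, mul_one]
  have e1ρ : (ρ * (s • 1)).trace = s := by
    rw [Matrix.mul_smul, Matrix.mul_one, Matrix.trace_smul, hρ.2, smul_eq_mul, mul_one]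
  have htrΔΔ : (Δ * Δ).trace = (ρ * ρ).trace - s := by
    rw [hΔ, Matrix.sub_mul, Matrix.mul_sub, Matrix.mul_sub, Matrix.trace_sub,
      Matrix.trace_sub, Matrix.trace_sub, e1ρ, e2ρ, e3]
    ring
  have hZZ : (Z * Z).trace = (ρ * ρ).trace - s - ((Sa / γ : ℝ) : ℂ) := by
    have hZmul : Z * Z = Δ * Δ - Δ * W - W * Δ + W * W := by
      rw [hZ]; noncomm_ring
    rw [hZmul, Matrix.trace_add, Matrix.trace_sub, Matrix.trace_sub, htrΔΔ, htrΔW,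
      Matrix.trace_mul_comm W Δ, htrΔW, htrWW]
    ring
  have hpos : 0 ≤ (Z * Z).trace.re := trace_sq_re_nonneg Z hZherm
  have hpur : (ρ * ρ).trace.re ≤ 1 := trace_sq_le_one hρ.1 hρ.2
  have hre : (Z * Z).trace.re = (ρ * ρ).trace.re - 1/δ - Sa/γ := by
    rw [hZZ, hs]
    simp [Complex.sub_re, Complex.ofReal_re]
  have hSaγ : Sa / γ ≤ 1 - 1/δ := by linarith
  have hSab : Sa ≤ γ * (1 - 1/δ) := by
    have h := (div_le_iff₀ hγ0).mp hSaγ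
    linarith
  have hfinal : ∑ b, ∑ n, t b n ^ 2 = Sa + (δ + 1)/δ := by
    have hterm : ∀ b n, t b n ^ 2 = a b n ^ 2 + (2/δ) * a b n + 1/δ^2 := by
      intro b n
      rw [hA]
      field_simp
      ring
    rw [Finset.sum_congr rfl fun (b : Fin (d+1)) _ =>
      Finset.sum_congr rfl fun (n : Fin d) _ => hterm b n]
    simp only [Finset.sum_add_distrib, ← Finset.mul_sum, hsuma, mul_zero,
      Finset.sum_const, Finset.card_univ, Fintype.card_fin, nsmul_eq_mul, smul_eq_mul]
    rw [← hSa]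
    have hdd : ((d : ℝ) + 1) * ((d : ℝ) * (1/δ^2)) = (δ + 1)/δ := by
      rw [← hδ]
      field_simp
    push_cast
    rw [← hδ] at *
    linarith [hdd]
  have hlast : γ * (1 - 1/δ) + (δ + 1)/δ = κ + 1 := by
    rw [hγ]
    field_simp
    ring
  show ∑ b, ∑ n, t b n ^ 2 ≤ κ + 1
  rw [hfinal]
  linarith

lemma dim_ge_two {d : ℕ} {κ : ℝ} {P : Fin (d + 1) → Fin d → Matrix (Fin d) (Fin d) ℂ}
    (hP : IsMUMs d κ P) (ρ0 : Matrix (Fin d) (Fin d) ℂ) (hρ0 : IsDensityMatrix ρ0) :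
    2 ≤ d := by
  rcases Nat.lt_or_ge d 2 with h | h
  · interval_cases d
    · exfalso
      have := hρ0.2
      simp [Matrix.trace] at this
    · exfalso
      obtain ⟨-, -, -, -, -, -, hgt, hle⟩ := hP
      norm_num at hgt
      linarith
  · exact h

/-- for a separable bipartite state ρ_AB and complete sets of MUMs
with efficiency parameters κ_A, κ_B on the two subsystems, the matrix J(ρ_AB)
with entries tr((P^{(b_A)}_{n_A} ⊗ Q^{(b_B)}_{n_B}) ρ_AB) satisfies
‖J(ρ_AB)‖_tr ≤ √(κ_A + 1) · √(κ_B + 1). -/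
theorem separability_criterion_MUM_correlation
    (dA dB : ℕ) (κA κB : ℝ)
    (P : Fin (dA + 1) → Fin dA → Matrix (Fin dA) (Fin dA) ℂ)
    (Q : Fin (dB + 1) → Fin dB → Matrix (Fin dB) (Fin dB) ℂ)
    (hP : IsMUMs dA κA P) (hQ : IsMUMs dB κB Q)
    (ρ : Matrix (Fin dA × Fin dB) (Fin dA × Fin dB) ℂ)
    (hρ : IsDensityMatrix ρ) (hsep : SeparableState ρ) :
    traceNorm (Matrix.of fun (p : Fin (dA + 1) × Fin dA) (q : Fin (dB + 1) × Fin dB) =>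
        ((P p.1 p.2 ⊗ₖ Q q.1 q.2) * ρ).trace) ≤
    Real.sqrt (κA + 1) * Real.sqrt (κB + 1) := by
  obtain ⟨K, p, ρA, ρB, hp0, hp1, hρA, hρB, hρeq⟩ := hsep
  have hK : 0 < K := by
    by_contra h
    push_neg at h
    interval_cases K
    simp at hp1
  have hdA : 2 ≤ dA := dim_ge_two hP (ρA ⟨0, hK⟩) (hρA _)
  have hdB : 2 ≤ dB := dim_ge_two hQ (ρB ⟨0, hK⟩) (hρB _)
  set u : Fin K → EuclideanSpace ℂ (Fin (dA + 1) × Fin dA) :=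
    fun i => WithLp.toLp 2 (fun pp => (P pp.1 pp.2 * ρA i).trace) with hu
  set w : Fin K → EuclideanSpace ℂ (Fin (dB + 1) × Fin dB) :=
    fun i => WithLp.toLp 2 (fun qq => (Q qq.1 qq.2 * ρB i).trace) with hw
  have hM : (Matrix.of fun (pp : Fin (dA + 1) × Fin dA) (qq : Fin (dB + 1) × Fin dB) =>
      ((P pp.1 pp.2 ⊗ₖ Q qq.1 qq.2) * ρ).trace) =
      (Matrix.of fun pp qq => ∑ i, (p i : ℂ) * u i pp * w i qq) := by
    ext pp qq
    simp only [Matrix.of_apply]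
    rw [hρeq, Matrix.mul_sum, Matrix.trace_sum]
    refine Finset.sum_congr rfl fun i _ => ?_
    rw [Matrix.mul_smul, Matrix.trace_smul, ← Matrix.mul_kronecker_mul,
      Matrix.trace_kronecker, smul_eq_mul]
    rw [hu, hw]
    ring
  rw [hM]
  refine le_trans (traceNorm_sum_rank_one p hp0 u w) ?_
  have hub : ∀ i, ‖u i‖ ≤ Real.sqrt (κA + 1) := by
    intro i
    rw [EuclideanSpace.norm_eq]
    have hsum : ∑ pp : Fin (dA + 1) × Fin dA, ‖u i pp‖ ^ 2 ≤ κA + 1 := by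
      rw [Fintype.sum_prod_type]
      have hterm : ∀ b n, ‖u i (b, n)‖ ^ 2 = ((P b n * ρA i).trace).re ^ 2 := by
        intro b n
        have := herm_mul_trace_real (hP.1 b n).1 (hρA i).1.1
        rw [hu]
        show ‖(P b n * ρA i).trace‖ ^ 2 = _
        conv_lhs => rw [this]
        rw [Complex.norm_real, Real.norm_eq_abs, sq_abs]
      rw [Finset.sum_congr rfl fun b _ => Finset.sum_congr rfl fun n _ => hterm b n]
      exact MUM_sum_sq_le hdA hP (hρA i)
    exact Real.sqrt_le_sqrt hsum
  have hwb : ∀ i, ‖w i‖ ≤ Real.sqrt (κB + 1) := by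
    intro i
    rw [EuclideanSpace.norm_eq]
    have hsum : ∑ qq : Fin (dB + 1) × Fin dB, ‖w i qq‖ ^ 2 ≤ κB + 1 := by
      rw [Fintype.sum_prod_type]
      have hterm : ∀ b n, ‖w i (b, n)‖ ^ 2 = ((Q b n * ρB i).trace).re ^ 2 := by
        intro b n
        have := herm_mul_trace_real (hQ.1 b n).1 (hρB i).1.1
        rw [hw]
        show ‖(Q b n * ρB i).trace‖ ^ 2 = _
        conv_lhs => rw [this]
        rw [Complex.norm_real, Real.norm_eq_abs, sq_abs]
      rw [Finset.sum_congr rfl fun b _ => Finset.sum_congr rfl fun n _ => hterm b n]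
      exact MUM_sum_sq_le hdB hQ (hρB i)
    exact Real.sqrt_le_sqrt hsum
  calc ∑ i, p i * (‖u i‖ * ‖w i‖)
      ≤ ∑ i, p i * (Real.sqrt (κA + 1) * Real.sqrt (κB + 1)) := by
        refine Finset.sum_le_sum fun i _ => ?_
        refine mul_le_mul_of_nonneg_left ?_ (hp0 i)
        exact mul_le_mul (hub i) (hwb i) (norm_nonneg _)
          (Real.sqrt_nonneg _)
    _ = Real.sqrt (κA + 1) * Real.sqrt (κB + 1) := by
        rw [← Finset.sum_mul, hp1, one_mul]
end

section
/- Let ρ_A and ρ_B be density matrices on ℂ^{d_A} and ℂ^{d_B}, let a ∈ ℝ^m and b ∈ ℝ^n, let {E^A_{α,k}} be an (N_A,M_A)-POVM on ℂ^{d_A} and {E^B_{β,l}} an (N_B,M_B)-POVM on ℂ^{d_B}. Then for the product state ρ_A ⊗ ρ_B one has P(ρ_A ⊗ ρ_B) = τσᵀ, so Q_{a,b}(ρ_A ⊗ ρ_B) is the rank-one matrix (a;τ)(bᵀ, σᵀ), and ‖Q_{a,b}(ρ_A ⊗ ρ_B)‖_tr = √(|a|² + |τ|²) · √(|b|² + |σ|²),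 where |·| denotes the Euclidean norm. -/
open scoped BigOperators ComplexOrder
open Matrix

open Kronecker

section
open scoped MatrixOrder

lemma traceNorm_eq_of_sq {m n : Type*} [Fintype m] [Fintype n] [DecidableEq n]
    (X : Matrix m n ℂ) (B : Matrix n n ℂ) (hB : B.PosSemidef) (h : B * B = Xᴴ * X) :
    traceNorm X = B.trace.re := by
  have hA := Matrix.posSemidef_conjTranspose_mul_self X
  have h1 : CFC.sqrt (Xᴴ * X) = B := CFC.sqrt_unique h hB.nonneg
  have h2 : CFC.sqrt (Xᴴ * X) = cfc Real.sqrt (Xᴴ * X) :=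
    (CFC.sqrt_eq_real_sqrt _ hA.nonneg).trans (cfcₙ_eq_cfc (hf0 := Real.sqrt_zero))
  rw [← h1, h2, hA.1.cfc_eq Real.sqrt, Matrix.IsHermitian.cfc, Unitary.conjStarAlgAut_apply]
  rfl

end

lemma traceNorm_zero {ι κ : Type*} [Fintype ι] [Fintype κ] [DecidableEq κ] :
    traceNorm (0 : Matrix ι κ ℂ) = 0 := by
  rw [traceNorm_eq_of_sq 0 0 Matrix.PosSemidef.zero (by simp)]
  simp

lemma vecMulVec_star_self_posSemidef {κ : Type*} [Fintype κ] (w : κ → ℂ) :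
    (Matrix.vecMulVec (star w) w).PosSemidef := by
  have h : Matrix.vecMulVec (star w) w = (Matrix.replicateRow Unit w)ᴴ * Matrix.replicateRow Unit w := by
    ext i j
    simp [Matrix.mul_apply, Matrix.vecMulVec_apply, Matrix.replicateRow_apply]
  rw [h]
  exact Matrix.posSemidef_conjTranspose_mul_self _

lemma conj_sq_sum {κ : Type*} [Fintype κ] (v : κ → ℂ) :
    ∑ l, starRingEnd ℂ (v l) * v l = ((∑ l, ‖v l‖ ^ 2 : ℝ) : ℂ) := by
  push_cast
  congr 1
  funext l
  rw [Complex.conj_mul']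

lemma gram_vecMulVec {ι κ : Type*} [Fintype ι] [Fintype κ]
    (u : ι → ℂ) (v : κ → ℂ) :
    (Matrix.vecMulVec u v)ᴴ * Matrix.vecMulVec u v =
      ((∑ i, ‖u i‖ ^ 2 : ℝ) : ℂ) • Matrix.vecMulVec (star v) v := by
  ext i j
  simp only [Matrix.mul_apply, Matrix.conjTranspose_apply, Matrix.vecMulVec_apply,
    Matrix.smul_apply, Pi.star_apply, smul_eq_mul, RCLike.star_def]
  rw [show ∑ l, starRingEnd ℂ (u l * v i) * (u l * v j)
    = (starRingEnd ℂ (v i) * v j) * ∑ l, starRingEnd ℂ (u l) * u l by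
      rw [Finset.mul_sum]; congr 1; funext l; rw [_root_.map_mul]; ring]
  rw [conj_sq_sum]
  ring

set_option maxHeartbeats 1000000 in
lemma traceNorm_vecMulVec {ι κ : Type*} [Fintype ι] [Fintype κ] [DecidableEq κ]
    (u : ι → ℂ) (v : κ → ℂ) :
    traceNorm (Matrix.vecMulVec u v) =
      Real.sqrt (∑ i, ‖u i‖ ^ 2) * Real.sqrt (∑ j, ‖v j‖ ^ 2) := by
  have hnu0 : 0 ≤ Real.sqrt (∑ i, ‖u i‖ ^ 2) := Real.sqrt_nonneg _
  have hnv0 : 0 ≤ Real.sqrt (∑ j, ‖v j‖ ^ 2) := Real.sqrt_nonneg _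
  have hsum_u : Real.sqrt (∑ i, ‖u i‖ ^ 2) ^ 2 = ∑ i, ‖u i‖ ^ 2 :=
    Real.sq_sqrt (by positivity)
  have hsum_v : Real.sqrt (∑ j, ‖v j‖ ^ 2) ^ 2 = ∑ j, ‖v j‖ ^ 2 :=
    Real.sq_sqrt (by positivity)
  rcases eq_or_ne (Real.sqrt (∑ j, ‖v j‖ ^ 2)) 0 with hv | hv
  · have hv0 : v = 0 := by
      funext j
      have h1 : ∑ j, ‖v j‖ ^ 2 = 0 := by rw [← hsum_v, hv]; ring
      have h2 : ‖v j‖ ^ 2 = 0 :=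
        (Finset.sum_eq_zero_iff_of_nonneg (fun j _ => by positivity)).mp h1 j
          (Finset.mem_univ j)
      simpa using h2
    have hX : Matrix.vecMulVec u v = 0 := by
      ext i j; simp [Matrix.vecMulVec_apply, hv0]
    rw [hX, hv, mul_zero, traceNorm_zero]
  · set nu := Real.sqrt (∑ i, ‖u i‖ ^ 2) with hnu
    set nv := Real.sqrt (∑ j, ‖v j‖ ^ 2) with hnv
    have hvpos : 0 < nv := lt_of_le_of_ne hnv0 (Ne.symm hv)
    have hc0 : 0 ≤ nu / nv := div_nonneg hnu0 hnv0
    have hSdef : Matrix.vecMulVec (star (fun j => (Real.sqrt (nu / nv) : ℂ) * v j))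
        (fun j => (Real.sqrt (nu / nv) : ℂ) * v j)
        = ((nu / nv : ℝ) : ℂ) • Matrix.vecMulVec (star v) v := by
      ext i j
      simp only [Matrix.vecMulVec_apply, Matrix.smul_apply, Pi.star_apply, star_mul',
        smul_eq_mul, RCLike.star_def, Complex.conj_ofReal]
      rw [show ((Real.sqrt (nu/nv) : ℝ) : ℂ) * (starRingEnd ℂ) (v i) *
          (((Real.sqrt (nu/nv) : ℝ) : ℂ) * v j)
        = (((Real.sqrt (nu/nv) * Real.sqrt (nu/nv) : ℝ)) : ℂ) *
          ((starRingEnd ℂ) (v i) * v j) by push_cast; ring]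
      rw [Real.mul_self_sqrt hc0]
    have hSpsd : (((nu / nv : ℝ) : ℂ) • Matrix.vecMulVec (star v) v).PosSemidef := by
      rw [← hSdef]; exact vecMulVec_star_self_posSemidef _
    have hWsq : Matrix.vecMulVec (star v) v * Matrix.vecMulVec (star v) v
        = ((nv ^ 2 : ℝ) : ℂ) • Matrix.vecMulVec (star v) v := by
      ext i j
      simp only [Matrix.mul_apply, Matrix.vecMulVec_apply, Matrix.smul_apply,
        Pi.star_apply, smul_eq_mul, RCLike.star_def]
      rw [show ∑ l, (starRingEnd ℂ) (v i) * v l * ((starRingEnd ℂ) (v l) * v j)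
        = ((starRingEnd ℂ) (v i) * v j) * ∑ l, (starRingEnd ℂ) (v l) * v l by
          rw [Finset.mul_sum]; congr 1; funext l; ring]
      rw [conj_sq_sum, hsum_v]
      ring
    have hsq : (((nu / nv : ℝ) : ℂ) • Matrix.vecMulVec (star v) v) ^ 2
        = (Matrix.vecMulVec u v)ᴴ * Matrix.vecMulVec u v := by
      rw [gram_vecMulVec, ← hsum_u, pow_two, Matrix.smul_mul, Matrix.mul_smul, smul_smul,
        hWsq, smul_smul]
      congr 1
      push_cast
      field_simp
    rw [traceNorm_eq_of_sq _ _ hSpsd (by rw [← pow_two]; exact hsq), Matrix.trace_smul]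
    have htrW : (Matrix.vecMulVec (star v) v).trace = ((nv ^ 2 : ℝ) : ℂ) := by
      unfold Matrix.trace
      simp only [Matrix.diag_apply, Matrix.vecMulVec_apply, Pi.star_apply, RCLike.star_def]
      rw [conj_sq_sum, hsum_v]
    rw [htrW]
    simp only [smul_eq_mul]
    rw [show ((nu / nv : ℝ) : ℂ) * ((nv ^ 2 : ℝ) : ℂ) = ((nu / nv * nv ^ 2 : ℝ) : ℂ) by
      push_cast; ring]
    rw [Complex.ofReal_re]
    field_simp

/-- for a product state ρ_A ⊗ ρ_B, the correlation matrix
factorizes as P(ρ_A ⊗ ρ_B) = τσᵀ, so Q_{a,b}(ρ_A ⊗ ρ_B) is the rank-one matrix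
(a;τ)(bᵀ,σᵀ), and ‖Q_{a,b}(ρ_A ⊗ ρ_B)‖_tr = √(|a|²+|τ|²)·√(|b|²+|σ|²). -/
theorem Q_of_product_state
    (dA dB NA MA NB MB m n : ℕ) (xA xB : ℝ)
    (EA : Fin NA → Fin MA → Matrix (Fin dA) (Fin dA) ℂ)
    (EB : Fin NB → Fin MB → Matrix (Fin dB) (Fin dB) ℂ)
    (hEA : IsNMPOVM dA NA MA xA EA) (hEB : IsNMPOVM dB NB MB xB EB)
    (a : Fin m → ℝ) (b : Fin n → ℝ)
    (ρA : Matrix (Fin dA) (Fin dA) ℂ) (ρB : Matrix (Fin dB) (Fin dB) ℂ)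
    (hρA : IsDensityMatrix ρA) (hρB : IsDensityMatrix ρB) :
    (∀ (p : Fin NA × Fin MA) (q : Fin NB × Fin MB),
      ((EA p.1 p.2 ⊗ₖ EB q.1 q.2) * (ρA ⊗ₖ ρB)).trace =
        (EA p.1 p.2 * ρA).trace * (EB q.1 q.2 * ρB).trace) ∧
    (Matrix.fromBlocks
      (Matrix.of fun (i : Fin m) (j : Fin n) => ((a i : ℂ) * (b j : ℂ)))
      (Matrix.of fun (i : Fin m) (q : Fin NB × Fin MB) =>
        (a i : ℂ) * (EB q.1 q.2 * ρB).trace)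
      (Matrix.of fun (p : Fin NA × Fin MA) (j : Fin n) =>
        (EA p.1 p.2 * ρA).trace * (b j : ℂ))
      (Matrix.of fun (p : Fin NA × Fin MA) (q : Fin NB × Fin MB) =>
        ((EA p.1 p.2 ⊗ₖ EB q.1 q.2) * (ρA ⊗ₖ ρB)).trace) =
      Matrix.vecMulVec
        (Sum.elim (fun i : Fin m => (a i : ℂ))
          (fun p : Fin NA × Fin MA => (EA p.1 p.2 * ρA).trace))
        (Sum.elim (fun j : Fin n => (b j : ℂ))
          (fun q : Fin NB × Fin MB => (EB q.1 q.2 * ρB).trace))) ∧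
    traceNorm (Matrix.fromBlocks
      (Matrix.of fun (i : Fin m) (j : Fin n) => ((a i : ℂ) * (b j : ℂ)))
      (Matrix.of fun (i : Fin m) (q : Fin NB × Fin MB) =>
        (a i : ℂ) * (EB q.1 q.2 * ρB).trace)
      (Matrix.of fun (p : Fin NA × Fin MA) (j : Fin n) =>
        (EA p.1 p.2 * ρA).trace * (b j : ℂ))
      (Matrix.of fun (p : Fin NA × Fin MA) (q : Fin NB × Fin MB) =>
        ((EA p.1 p.2 ⊗ₖ EB q.1 q.2) * (ρA ⊗ₖ ρB)).trace)) =
    Real.sqrt (∑ i, a i ^ 2 + ∑ p : Fin NA × Fin MA, ‖(EA p.1 p.2 * ρA).trace‖ ^ 2) *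
    Real.sqrt (∑ j, b j ^ 2 + ∑ q : Fin NB × Fin MB, ‖(EB q.1 q.2 * ρB).trace‖ ^ 2) := by
  have h1 : ∀ (p : Fin NA × Fin MA) (q : Fin NB × Fin MB),
      ((EA p.1 p.2 ⊗ₖ EB q.1 q.2) * (ρA ⊗ₖ ρB)).trace =
        (EA p.1 p.2 * ρA).trace * (EB q.1 q.2 * ρB).trace := by
    intro p q
    rw [← Matrix.mul_kronecker_mul, Matrix.trace_kronecker]
  have h2 : (Matrix.fromBlocks
      (Matrix.of fun (i : Fin m) (j : Fin n) => ((a i : ℂ) * (b j : ℂ)))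
      (Matrix.of fun (i : Fin m) (q : Fin NB × Fin MB) =>
        (a i : ℂ) * (EB q.1 q.2 * ρB).trace)
      (Matrix.of fun (p : Fin NA × Fin MA) (j : Fin n) =>
        (EA p.1 p.2 * ρA).trace * (b j : ℂ))
      (Matrix.of fun (p : Fin NA × Fin MA) (q : Fin NB × Fin MB) =>
        ((EA p.1 p.2 ⊗ₖ EB q.1 q.2) * (ρA ⊗ₖ ρB)).trace)) =
      Matrix.vecMulVec
        (Sum.elim (fun i : Fin m => (a i : ℂ))
          (fun p : Fin NA × Fin MA => (EA p.1 p.2 * ρA).trace))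
        (Sum.elim (fun j : Fin n => (b j : ℂ))
          (fun q : Fin NB × Fin MB => (EB q.1 q.2 * ρB).trace)) := by
    ext i j
    cases i <;> cases j <;>
      simp [Matrix.vecMulVec_apply, h1]
  refine ⟨h1, h2, ?_⟩
  rw [h2, traceNorm_vecMulVec]
  congr 1
  · congr 1
    rw [Fintype.sum_sum_type]
    simp [Complex.norm_real, sq_abs]
  · congr 1
    rw [Fintype.sum_sum_type]
    simp [Complex.norm_real, sq_abs]
end

section
/- Let {G_{α,k} : α=1,…,N, k=1,…,M−1} be traceless Hermitian d×d matrices that are orthonormal with respect to the Hilbert–Schmidt inner product (tr(G_{α,k}G_{β,l}) = δ_{αβ}δ_{kl}), set G_α = Σ_{k=1}^{M−1} G_{α,k}, define H_{α,k} = G_α − √M(√M+1)G_{α,k} for k = 1,…,M−1 and H_{α,M} = (√M+1)G_α, and for a real parameter t set E_{α,k} = (1/M)I_d + t H_{α,k}. Then for every α: Σ_{k=1}^{M} E_{α,k} = I_d; tr(E_{α,k}) = d/M for all k; tr(E_{α,k}²) = d/M² + t²(M−1)(√M+1)² for all k; tr(E_{α,k}E_{α,l}) = d/M² − t²(√M+1)²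 for all k ≠ l; and tr(E_{α,k}E_{β,l}) = d/M² for all α ≠ β and all k, l. -/
open scoped BigOperators ComplexOrder
open Matrix

/-- given traceless Hermitian orthonormal matrices G_{α,k}
(α = 1,…,N, k = 1,…,M−1), with G_α = Σ_k G_{α,k},
H_{α,k} = G_α − √M(√M+1)G_{α,k} (k < M), H_{α,M} = (√M+1)G_α, and
E_{α,k} = (1/M)I_d + t H_{α,k}, the operators E_{α,k} satisfy
Σ_k E_{α,k} = I_d, tr(E_{α,k}) = d/M, tr(E_{α,k}²) = d/M² + t²(M−1)(√M+1)²,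
tr(E_{α,k}E_{α,l}) = d/M² − t²(√M+1)² for k ≠ l, and
tr(E_{α,k}E_{β,l}) = d/M² for α ≠ β. -/
theorem symmetric_measurement_construction
    (d N M : ℕ) (hM : 2 ≤ M) (t : ℝ)
    (G : Fin N → Fin (M - 1) → Matrix (Fin d) (Fin d) ℂ)
    (hHerm : ∀ α k, (G α k).IsHermitian)
    (hTraceless : ∀ α k, (G α k).trace = 0)
    (hOrtho : ∀ α k β l, (G α k * G β l).trace = if α = β ∧ k = l then 1 else 0)
    (H : Fin N → Fin M → Matrix (Fin d) (Fin d) ℂ)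
    (hH : ∀ α (k : Fin M), H α k =
      if h : (k : ℕ) < M - 1 then
        (∑ l, G α l) - (Real.sqrt M * (Real.sqrt M + 1)) • G α ⟨(k : ℕ), h⟩
      else (Real.sqrt M + 1) • (∑ l, G α l))
    (E : Fin N → Fin M → Matrix (Fin d) (Fin d) ℂ)
    (hE : ∀ α k, E α k = ((M : ℝ)⁻¹) • (1 : Matrix (Fin d) (Fin d) ℂ) + t • H α k) :
    (∀ α, ∑ k, E α k = 1) ∧
    (∀ α k, (E α k).trace = (((d : ℝ) / M : ℝ) : ℂ)) ∧
    (∀ α k, (E α k * E α k).trace =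
      (((d : ℝ) / M ^ 2 + t ^ 2 * ((M : ℝ) - 1) * (Real.sqrt M + 1) ^ 2 : ℝ) : ℂ)) ∧
    (∀ α k l, k ≠ l → (E α k * E α l).trace =
      (((d : ℝ) / M ^ 2 - t ^ 2 * (Real.sqrt M + 1) ^ 2 : ℝ) : ℂ)) ∧
    (∀ α β k l, α ≠ β → (E α k * E β l).trace = (((d : ℝ) / M ^ 2 : ℝ) : ℂ)) := by
  have hMpos : 0 < M := by omega
  have hM1 : M - 1 + 1 = M := Nat.succ_pred_eq_of_pos hMpos
  have hMne : (M : ℝ) ≠ 0 := by positivity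
  have hcard : ((M - 1 : ℕ) : ℂ) = (M : ℂ) - 1 := by
    push_cast [Nat.cast_sub (by omega : 1 ≤ M)]; ring
  have hs : (Real.sqrt M) ^ 2 = (M : ℝ) := Real.sq_sqrt (Nat.cast_nonneg M)
  have hsC : ((Real.sqrt M : ℝ) : ℂ) ^ 2 = (M : ℂ) := by exact_mod_cast congrArg Complex.ofReal hs
  -- trace helper lemmas
  have tSG : ∀ α β l, ((∑ m, G α m) * G β l).trace = if α = β then (1 : ℂ) else 0 := by
    intro α β l
    rw [Finset.sum_mul, trace_sum]
    simp only [hOrtho]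
    by_cases hab : α = β <;> simp [hab]
  have tGS : ∀ α k β, (G α k * ∑ m, G β m).trace = if α = β then (1 : ℂ) else 0 := by
    intro α k β
    rw [Matrix.mul_sum, trace_sum]
    simp only [hOrtho]
    by_cases hab : α = β <;> simp [hab]
  have tSS : ∀ α β, ((∑ m, G α m) * ∑ m, G β m).trace = if α = β then ((M : ℂ) - 1) else 0 := by
    intro α β
    rw [Finset.sum_mul, trace_sum]
    simp only [tGS]
    by_cases hab : α = β <;> simp [hab, Finset.sum_const, Finset.card_univ, hcard]
  have tH : ∀ α k, (H α k).trace = 0 := by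
    intro α k
    rw [hH]
    by_cases hk : (k : ℕ) < M - 1
    · rw [dif_pos hk]; simp [trace_sub, trace_smul, trace_sum, hTraceless]
    · rw [dif_neg hk]; simp [trace_smul, trace_sum, hTraceless]
  have keyHH : ∀ α β k l, (H α k * H β l).trace =
      if α = β then
        ((if k = l then (((M : ℝ) - 1) * (Real.sqrt M + 1) ^ 2 : ℝ)
          else (-(Real.sqrt M + 1) ^ 2 : ℝ) : ℝ) : ℂ)
      else 0 := by
    intro α β k l
    rw [hH, hH]
    by_cases hk : (k : ℕ) < M - 1 <;> by_cases hl : (l : ℕ) < M - 1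
    · rw [dif_pos hk, dif_pos hl]
      have hmk : ((⟨(k : ℕ), hk⟩ : Fin (M - 1)) = ⟨(l : ℕ), hl⟩) ↔ k = l := by
        simp [Fin.ext_iff]
      simp only [sub_mul, mul_sub, smul_mul_assoc, mul_smul_comm, smul_smul, trace_sub,
        trace_smul, tSS, tSG, tGS, hOrtho]
      by_cases hab : α = β
      · by_cases h2 : k = l
        · simp only [hab, h2, hmk, if_true, and_self, ite_true, Complex.real_smul]
          push_cast
          rw [← hsC]; ring
        · simp only [hab, h2, hmk, if_true, and_false, ite_true, ite_false, Complex.real_smul,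
            mul_zero, smul_zero]
          push_cast
          rw [← hsC]; ring
      · simp [hab]
    · rw [dif_pos hk, dif_neg hl]
      have hne : k ≠ l := fun h => hl (h ▸ hk)
      simp only [mul_smul_comm, sub_mul, smul_mul_assoc, smul_smul, trace_smul, trace_sub,
        smul_sub, tSS, tGS]
      by_cases hab : α = β
      · simp only [hab, hne, if_true, ite_true, ite_false, Complex.real_smul]
        push_cast
        rw [← hsC]; ring
      · simp [hab, hne]
    · rw [dif_neg hk, dif_pos hl]
      have hne : k ≠ l := fun h => hk (h ▸ hl)
      simp only [smul_mul_assoc, mul_sub, mul_smul_comm, smul_smul, trace_smul, trace_sub,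
        smul_sub, tSS, tSG]
      by_cases hab : α = β
      · simp only [hab, hne, if_true, ite_true, ite_false, Complex.real_smul]
        push_cast
        rw [← hsC]; ring
      · simp [hab, hne]
    · rw [dif_neg hk, dif_neg hl]
      have hkl : k = l := by
        have h1 := k.isLt
        have h2 := l.isLt
        exact Fin.ext (by omega)
      simp only [smul_mul_assoc, mul_smul_comm, smul_smul, trace_smul, tSS]
      by_cases hab : α = β
      · simp only [hab, hkl, if_true, ite_true, Complex.real_smul]
        push_cast
        ring
      · simp [hab]
  have hEE : ∀ α β k l, (E α k * E β l).trace
      = (d : ℂ) / (M : ℂ) ^ 2 + (t : ℂ) ^ 2 * (H α k * H β l).trace := by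
    intro α β k l
    rw [hE, hE, add_mul, mul_add, mul_add]
    simp only [smul_mul_assoc, mul_smul_comm, smul_smul, one_mul, mul_one, trace_add,
      trace_smul, tH, smul_zero, trace_one, Fintype.card_fin, Complex.real_smul]
    push_cast
    ring
  have hsumH : ∀ α, ∑ k, H α k = 0 := by
    intro α
    rw [← Fin.sum_congr' (fun k => H α k) hM1, Fin.sum_univ_castSucc]
    have h1 : ∀ k : Fin (M - 1), H α (Fin.cast hM1 k.castSucc)
        = (∑ l, G α l) - (Real.sqrt M * (Real.sqrt M + 1)) • G α k := by
      intro k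
      rw [hH, dif_pos (show ((Fin.cast hM1 k.castSucc : Fin M) : ℕ) < M - 1 by
        simp)]
      rfl
    have h2 : H α (Fin.cast hM1 (Fin.last (M - 1)))
        = (Real.sqrt M + 1) • (∑ l, G α l) := by
      rw [hH, dif_neg (by simp)]
    rw [Finset.sum_congr rfl (fun k _ => h1 k), h2, Finset.sum_sub_distrib,
      Finset.sum_const, ← Finset.smul_sum, Finset.card_univ, Fintype.card_fin,
      ← Nat.cast_smul_eq_nsmul ℝ]
    rw [← sub_smul, ← add_smul,
      show ((M - 1 : ℕ) : ℝ) - Real.sqrt M * (Real.sqrt M + 1) + (Real.sqrt M + 1) = 0 by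
        push_cast [Nat.cast_sub (by omega : 1 ≤ M)]
        linear_combination -hs,
      zero_smul]
  refine ⟨?_, ?_, ?_, ?_, ?_⟩
  · intro α
    simp only [hE]
    rw [Finset.sum_add_distrib]
    simp only [← Finset.smul_sum, hsumH, smul_zero, add_zero]
    rw [Finset.sum_const, Finset.card_univ, Fintype.card_fin, ← Nat.cast_smul_eq_nsmul ℝ,
      smul_smul, inv_mul_cancel₀ hMne, one_smul]
  · intro α k
    rw [hE, trace_add, trace_smul, trace_smul, tH, smul_zero, add_zero, trace_one]
    simp only [Fintype.card_fin, Complex.real_smul]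
    push_cast
    ring
  · intro α k
    rw [hEE, keyHH]
    simp only [if_true, ite_true]
    push_cast
    ring
  · intro α k l hkl
    rw [hEE, keyHH]
    simp only [if_true, ite_true, hkl, ite_false, if_neg hkl]
    push_cast
    ring
  · intro α β k l hab
    rw [hEE, keyHH, if_neg hab]
    push_cast
    ring
end
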